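/- arXiv:1308.2259 — 4 statements merged into one kernel-verified Lean document; each statement's English description precedes it below -/
import Mathlib

section
/- Let q > 2. The two positive roots x₀(α) < x₁(α) of f(t) = t² - 1 - α t^q are differentiable functions of α on (0, α*(q)), with dx_k/dα = x_k^{q+1}/(q - (q-2)x_k²) for k = 0, 1; moreover dx₀/dα > 0 and dx₁/dα < 0 on (0, α*(q)). -/
open Set Filter MeasureTheory

noncomputable def fQ (q α t : ℝ) : ℝ := t ^ 2 - 1 - α * t ^ q

noncomputable def alphaStar (q : ℝ) : ℝ := 2 / (q - 2) * ((q - 2) / q) ^ (q / 2)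

noncomputable def x0 (q α : ℝ) : ℝ := sInf {t : ℝ | 0 < t ∧ fQ q α t = 0}

noncomputable def x1 (q α : ℝ) : ℝ := sSup {t : ℝ | 0 < t ∧ fQ q α t = 0}

noncomputable def Iq (q α : ℝ) : ℝ := ∫ t in x0 q α..x1 q α, 1 / Real.sqrt (fQ q α t)

noncomputable def fQd1 (q α t : ℝ) : ℝ := 2 * t - α * q * t ^ (q - 1)

noncomputable def fQd2 (q α t : ℝ) : ℝ := 2 - α * q * (q - 1) * t ^ (q - 2)

noncomputable def fQd3 (q α t : ℝ) : ℝ := -(α * q * (q - 1) * (q - 2) * t ^ (q - 3))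

noncomputable def psiQ (q α t : ℝ) : ℝ := fQd1 q α t ^ 2 - 2 * fQ q α t * fQd2 q α t

section AuxStmt12
open Topology

noncomputable def gQ (q t : ℝ) : ℝ := (t ^ 2 - 1) * t ^ (-q)
noncomputable def cQ (q : ℝ) : ℝ := Real.sqrt (q / (q - 2))

variable {q : ℝ}

lemma hq2 (hq : 2 < q) : 0 < q - 2 := by linarith
lemma hq0 (hq : 2 < q) : 0 < q := by linarith

lemma c_sq (hq : 2 < q) : cQ q ^ 2 = q / (q - 2) :=
  Real.sq_sqrt (div_nonneg (hq0 hq).le (hq2 hq).le)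

lemma one_lt_c (hq : 2 < q) : 1 < cQ q := by
  rw [show (1:ℝ) = Real.sqrt 1 by simp [Real.sqrt_one]]
  apply Real.sqrt_lt_sqrt (by norm_num)
  rw [lt_div_iff₀ (hq2 hq)]; linarith

lemma c_pos (hq : 2 < q) : 0 < cQ q := lt_trans one_pos (one_lt_c hq)

lemma gQ_hasDeriv (hq : 2 < q) {t : ℝ} (ht : 0 < t) :
    HasDerivAt (gQ q) (t ^ (-q - 1) * (q - (q - 2) * t ^ 2)) t := by
  have h1 : HasDerivAt (fun t : ℝ => t ^ 2 - 1) (2 * t) t := by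
    simpa using ((hasDerivAt_pow 2 t).sub_const 1)
  have h2 : HasDerivAt (fun t : ℝ => t ^ (-q)) (-q * t ^ (-q - 1)) t :=
    Real.hasDerivAt_rpow_const (Or.inl ht.ne')
  have h := h1.mul h2
  have key : t ^ (-q) = t ^ (-q - 1) * t := by
    rw [← Real.rpow_add_one ht.ne' (-q - 1)]; norm_num
  refine h.congr_deriv ?_
  rw [key]; ring

lemma gQ_contOn (hq : 2 < q) {s : Set ℝ} (hs : ∀ t ∈ s, (0:ℝ) < t) :
    ContinuousOn (gQ q) s := fun t ht =>
  ((gQ_hasDeriv hq (hs t ht)).continuousAt).continuousWithinAt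

lemma strictMono_g (hq : 2 < q) : StrictMonoOn (gQ q) (Icc 1 (cQ q)) := by
  apply strictMonoOn_of_deriv_pos (convex_Icc _ _)
  · exact gQ_contOn hq (fun t ht => lt_of_lt_of_le one_pos ht.1)
  · intro x hx
    rw [interior_Icc] at hx
    have hx0 : 0 < x := lt_trans one_pos hx.1
    rw [(gQ_hasDeriv hq hx0).deriv]
    have h1 : (0:ℝ) < x ^ (-q - 1) := Real.rpow_pos_of_pos hx0 _
    have h2 : x ^ 2 < q / (q - 2) := by
      rw [← c_sq hq]
      exact pow_lt_pow_left₀ hx.2 hx0.le two_ne_zero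
    have h3 : (q - 2) * x ^ 2 < q := by
      rw [lt_div_iff₀ (hq2 hq)] at h2; linarith
    exact mul_pos h1 (by linarith)

lemma strictAnti_g (hq : 2 < q) : StrictAntiOn (gQ q) (Ici (cQ q)) := by
  apply strictAntiOn_of_deriv_neg (convex_Ici _)
  · exact gQ_contOn hq (fun t ht => lt_of_lt_of_le (c_pos hq) ht)
  · intro x hx
    rw [interior_Ici] at hx
    have hx0 : 0 < x := lt_trans (c_pos hq) hx
    rw [(gQ_hasDeriv hq hx0).deriv]
    have h1 : (0:ℝ) < x ^ (-q - 1) := Real.rpow_pos_of_pos hx0 _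
    have h2 : q / (q - 2) < x ^ 2 := by
      rw [← c_sq hq]
      exact pow_lt_pow_left₀ hx (c_pos hq).le two_ne_zero
    have h3 : q < (q - 2) * x ^ 2 := by
      rw [div_lt_iff₀ (hq2 hq)] at h2; linarith
    exact mul_neg_of_pos_of_neg h1 (by linarith)

lemma g_one : gQ q 1 = 0 := by rw [gQ]; norm_num

lemma g_c (hq : 2 < q) : gQ q (cQ q) = alphaStar q := by
  have hd : (0:ℝ) ≤ q / (q - 2) := div_nonneg (hq0 hq).le (hq2 hq).le
  have h1 : cQ q ^ 2 - 1 = 2 / (q - 2) := by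
    have hne : q - 2 ≠ 0 := (hq2 hq).ne'
    rw [c_sq hq]; field_simp; ring
  have h2 : cQ q ^ (-q) = ((q - 2) / q) ^ (q / 2) := by
    rw [cQ, Real.sqrt_eq_rpow, ← Real.rpow_mul hd,
      show (1/2) * (-q) = -(q/2) by ring, Real.rpow_neg hd,
      show ((q-2)/q : ℝ) = (q/(q-2))⁻¹ by rw [inv_div], Real.inv_rpow hd]
  rw [gQ, h1, h2, alphaStar]

lemma alphaStar_pos (hq : 2 < q) : 0 < alphaStar q := by
  rw [alphaStar]
  exact mul_pos (div_pos two_pos (hq2 hq))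
    (Real.rpow_pos_of_pos (div_pos (hq2 hq) (hq0 hq)) _)

lemma g_pos (hq : 2 < q) {t : ℝ} (ht : 1 < t) : 0 < gQ q t := by
  rw [gQ]
  have h0 : (0:ℝ) < t := lt_trans one_pos ht
  exact mul_pos (by nlinarith) (Real.rpow_pos_of_pos h0 _)

lemma root_iff (hq : 2 < q) {α t : ℝ} (ht : 0 < t) :
    fQ q α t = 0 ↔ gQ q t = α := by
  have hne : t ^ q ≠ 0 := (Real.rpow_pos_of_pos ht q).ne'
  rw [fQ, gQ, Real.rpow_neg ht.le, sub_eq_zero]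
  rw [mul_inv_eq_iff_eq_mul₀ hne, mul_comm α]

lemma root_gt_one (hq : 2 < q) {α t : ℝ} (hα : 0 < α) (ht : 0 < t)
    (h : fQ q α t = 0) : 1 < t := by
  by_contra hle
  push_neg at hle
  have h1 : α * t ^ q > 0 := mul_pos hα (Real.rpow_pos_of_pos ht q)
  have h2 : t ^ 2 ≤ 1 := by nlinarith
  rw [fQ] at h; nlinarith

/-- Main structural lemma: both roots with full characterization. -/
lemma roots_main (hq : 2 < q) {α : ℝ} (hα : α ∈ Ioo 0 (alphaStar q)) :
    (x0 q α ∈ Ioo 1 (cQ q) ∧ gQ q (x0 q α) = α) ∧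
      (x1 q α ∈ Ioi (cQ q) ∧ gQ q (x1 q α) = α) := by
  obtain ⟨hα0, hα1⟩ := hα
  -- left root
  have hc1 : (1:ℝ) ≤ cQ q := (one_lt_c hq).le
  have hIVT0 : α ∈ Ioo (gQ q 1) (gQ q (cQ q)) := by
    rw [g_one, g_c hq]; exact ⟨hα0, hα1⟩
  obtain ⟨a, ha, hga⟩ := intermediate_value_Ioo hc1
    (gQ_contOn hq (fun t ht => lt_of_lt_of_le one_pos ht.1)) hIVT0
  -- right root : find T with gQ q T < α
  obtain ⟨T, hT⟩ : ∃ T, cQ q < T ∧ gQ q T < α := by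
    have htend := tendsto_rpow_neg_atTop (show (0:ℝ) < q - 2 by linarith)
    have hev : ∀ᶠ t : ℝ in atTop, t ^ (-(q-2)) < α :=
      htend.eventually_lt_const hα0
    obtain ⟨T, hT1, hT2⟩ := (hev.and (eventually_gt_atTop (cQ q))).exists
    refine ⟨T, hT2, ?_⟩
    have hTc : 1 < T := lt_trans (one_lt_c hq) hT2
    have hT0 : 0 < T := lt_trans one_pos hTc
    have hrp : (0:ℝ) < T ^ (-q) := Real.rpow_pos_of_pos hT0 _
    have key : T ^ (2:ℕ) * T ^ (-q) = T ^ (-(q-2)) := by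
      rw [← Real.rpow_natCast T 2, ← Real.rpow_add hT0]
      norm_num
      congr 1
    have : gQ q T < T ^ (2:ℕ) * T ^ (-q) := by
      rw [gQ]
      exact mul_lt_mul_of_pos_right (by linarith [sub_lt_self (T^(2:ℕ)) one_pos]) hrp
    calc gQ q T < T ^ (2:ℕ) * T ^ (-q) := this
      _ = T ^ (-(q-2)) := key
      _ < α := hT1
  have hIVT1 : α ∈ Ioo (gQ q T) (gQ q (cQ q)) := by
    rw [g_c hq]; exact ⟨hT.2, hα1⟩
  obtain ⟨b, hb, hgb⟩ := intermediate_value_Ioo' hT.1.le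
    (gQ_contOn hq (fun t ht => lt_of_lt_of_le (c_pos hq) ht.1)) hIVT1
  -- the root set is exactly {a, b}
  have ha0 : (0:ℝ) < a := lt_trans one_pos ha.1
  have hb0 : (0:ℝ) < b := lt_trans (c_pos hq) hb.1
  have hset : {t : ℝ | 0 < t ∧ fQ q α t = 0} = {a, b} := by
    ext t
    simp only [mem_setOf_eq, mem_insert_iff, mem_singleton_iff]
    constructor
    · rintro ⟨ht0, htr⟩
      have ht1 : 1 < t := root_gt_one hq hα0 ht0 htr
      have hgt : gQ q t = α := (root_iff hq ht0).1 htr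
      rcases le_or_gt t (cQ q) with hcase | hcase
      · left
        exact (strictMono_g hq).injOn ⟨ht1.le, hcase⟩ ⟨ha.1.le, ha.2.le⟩
          (hgt.trans hga.symm)
      · right
        exact (strictAnti_g hq).injOn (le_of_lt hcase) (le_of_lt hb.1)
          (hgt.trans hgb.symm)
    · rintro (rfl | rfl)
      · exact ⟨ha0, (root_iff hq ha0).2 hga⟩
      · exact ⟨hb0, (root_iff hq hb0).2 hgb⟩
  have hab : a < b := lt_trans ha.2 hb.1
  have hx0 : x0 q α = a := by
    rw [x0, hset, csInf_pair, min_eq_left hab.le]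
  have hx1 : x1 q α = b := by
    rw [x1, hset, csSup_pair, max_eq_right hab.le]
  rw [hx0, hx1]
  exact ⟨⟨ha, hga⟩, ⟨hb.1, hgb⟩⟩

lemma x0_uniq (hq : 2 < q) {α t : ℝ} (hα : α ∈ Ioo 0 (alphaStar q))
    (ht : t ∈ Ioo 1 (cQ q)) (hgt : gQ q t = α) : x0 q α = t := by
  obtain ⟨⟨hmem, hg⟩, _⟩ := roots_main hq hα
  exact (strictMono_g hq).injOn ⟨hmem.1.le, hmem.2.le⟩ ⟨ht.1.le, ht.2.le⟩
    (hg.trans hgt.symm)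

lemma x1_uniq (hq : 2 < q) {α t : ℝ} (hα : α ∈ Ioo 0 (alphaStar q))
    (ht : t ∈ Ioi (cQ q)) (hgt : gQ q t = α) : x1 q α = t := by
  obtain ⟨_, ⟨hmem, hg⟩⟩ := roots_main hq hα
  exact (strictAnti_g hq).injOn (mem_Ici.2 hmem.le) (mem_Ici.2 ht.le) (hg.trans hgt.symm)

lemma x0_mono (hq : 2 < q) : StrictMonoOn (x0 q) (Ioo 0 (alphaStar q)) := by
  intro α hα β hβ hlt
  obtain ⟨⟨hma, hga⟩, _⟩ := roots_main hq hα
  obtain ⟨⟨hmb, hgb⟩, _⟩ := roots_main hq hβ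
  by_contra hcon
  push_neg at hcon
  have := (strictMono_g hq).monotoneOn ⟨hmb.1.le, hmb.2.le⟩ ⟨hma.1.le, hma.2.le⟩ hcon
  rw [hga, hgb] at this
  linarith
lemma x1_mono (hq : 2 < q) :
    StrictMonoOn (fun α => -(x1 q α)) (Ioo 0 (alphaStar q)) := by
  intro α hα β hβ hlt
  obtain ⟨_, ⟨hma, hga⟩⟩ := roots_main hq hα
  obtain ⟨_, ⟨hmb, hgb⟩⟩ := roots_main hq hβ
  simp only [neg_lt_neg_iff]
  by_contra hcon
  push_neg at hcon
  have := (strictAnti_g hq).antitoneOn (mem_Ici.2 hma.le) (mem_Ici.2 hmb.le) hcon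
  rw [hga, hgb] at this
  linarith

lemma x0_surj (hq : 2 < q) : Ioo 1 (cQ q) ⊆ x0 q '' (Ioo 0 (alphaStar q)) := by
  intro x hx
  have hmem : gQ q x ∈ Ioo 0 (alphaStar q) := by
    refine ⟨g_pos hq hx.1, ?_⟩
    rw [← g_c hq]
    exact strictMono_g hq ⟨hx.1.le, hx.2.le⟩ ⟨(one_lt_c hq).le, le_refl _⟩ hx.2
  exact ⟨gQ q x, hmem, x0_uniq hq hmem hx rfl⟩

lemma x1_surj (hq : 2 < q) :
    Iio (-(cQ q)) ⊆ (fun α => -(x1 q α)) '' (Ioo 0 (alphaStar q)) := by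
  intro y hy
  have hx : -y ∈ Ioi (cQ q) := by simp only [mem_Ioi]; simpa [mem_Iio, lt_neg] using hy
  have hmem : gQ q (-y) ∈ Ioo 0 (alphaStar q) := by
    refine ⟨g_pos hq (lt_trans (one_lt_c hq) hx), ?_⟩
    rw [← g_c hq]
    exact strictAnti_g hq (mem_Ici.2 (le_refl _)) (mem_Ici.2 hx.le) hx
  refine ⟨gQ q (-y), hmem, ?_⟩
  simp only []
  rw [x1_uniq hq hmem hx rfl]; ring

lemma x0_cont (hq : 2 < q) {α : ℝ} (hα : α ∈ Ioo 0 (alphaStar q)) :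
    ContinuousAt (x0 q) α := by
  refine (x0_mono hq).continuousAt_of_image_mem_nhds (isOpen_Ioo.mem_nhds hα) ?_
  refine mem_of_superset (isOpen_Ioo.mem_nhds ?_) (x0_surj hq)
  exact (roots_main hq hα).1.1

lemma x1_cont (hq : 2 < q) {α : ℝ} (hα : α ∈ Ioo 0 (alphaStar q)) :
    ContinuousAt (x1 q) α := by
  have h : ContinuousAt (fun α => -(x1 q α)) α := by
    refine (x1_mono hq).continuousAt_of_image_mem_nhds (isOpen_Ioo.mem_nhds hα) ?_
    refine mem_of_superset (isOpen_Iio.mem_nhds ?_) (x1_surj hq)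
    simpa using (roots_main hq hα).2.1
  have := h.neg
  simpa [Pi.neg_def] using this

theorem stmt_12_aux (q : ℝ) (hq : 2 < q) :
    ∀ α ∈ Ioo (0 : ℝ) (alphaStar q),
      (HasDerivAt (x0 q) (x0 q α ^ (q + 1) / (q - (q - 2) * x0 q α ^ 2)) α ∧
        0 < x0 q α ^ (q + 1) / (q - (q - 2) * x0 q α ^ 2)) ∧
      (HasDerivAt (x1 q) (x1 q α ^ (q + 1) / (q - (q - 2) * x1 q α ^ 2)) α ∧
        x1 q α ^ (q + 1) / (q - (q - 2) * x1 q α ^ 2) < 0) := by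
  intro α hα
  obtain ⟨⟨hm0, hg0⟩, ⟨hm1, hg1⟩⟩ := roots_main hq hα
  have hev0 : ∀ᶠ β in 𝓝 α, gQ q (x0 q β) = β := by
    filter_upwards [isOpen_Ioo.mem_nhds hα] with β hβ
    exact (roots_main hq hβ).1.2
  have hev1 : ∀ᶠ β in 𝓝 α, gQ q (x1 q β) = β := by
    filter_upwards [isOpen_Ioo.mem_nhds hα] with β hβ
    exact (roots_main hq hβ).2.2
  constructor
  · set t := x0 q α with hts
    have ht0 : (0:ℝ) < t := lt_trans one_pos hm0.1
    set K := q - (q - 2) * t ^ 2 with hK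
    have hKpos : 0 < K := by
      have h2 : t ^ 2 < q / (q - 2) := by
        rw [← c_sq hq]
        exact pow_lt_pow_left₀ hm0.2 ht0.le two_ne_zero
      have h3 : (q - 2) * t ^ 2 < q := by
        rw [lt_div_iff₀ (hq2 hq)] at h2; linarith
      rw [hK]; linarith
    have hD : (0:ℝ) < t ^ (-q - 1) * K :=
      mul_pos (Real.rpow_pos_of_pos ht0 _) hKpos
    have hder : HasDerivAt (gQ q) (t ^ (-q - 1) * K) (x0 q α) :=
      gQ_hasDeriv hq ht0
    have h := HasDerivAt.of_local_left_inverse (x0_cont hq hα) hder hD.ne' hev0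
    have heq : (t ^ (-q - 1) * K)⁻¹ = t ^ (q + 1) / K := by
      have hre : (t ^ (-q - 1) : ℝ) = (t ^ (q + 1))⁻¹ := by
        rw [← Real.rpow_neg ht0.le]
        congr 1; ring
      rw [hre, mul_inv, inv_inv, div_eq_mul_inv]
    rw [heq] at h
    exact ⟨h, div_pos (Real.rpow_pos_of_pos ht0 _) hKpos⟩
  · set t := x1 q α with hts
    have ht0 : (0:ℝ) < t := lt_trans (c_pos hq) hm1
    set K := q - (q - 2) * t ^ 2 with hK
    have hKneg : K < 0 := by
      have h2 : q / (q - 2) < t ^ 2 := by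
        rw [← c_sq hq]
        exact pow_lt_pow_left₀ hm1 (c_pos hq).le two_ne_zero
      have h3 : q < (q - 2) * t ^ 2 := by
        rw [div_lt_iff₀ (hq2 hq)] at h2; linarith
      rw [hK]; linarith
    have hD : t ^ (-q - 1) * K < 0 :=
      mul_neg_of_pos_of_neg (Real.rpow_pos_of_pos ht0 _) hKneg
    have hder : HasDerivAt (gQ q) (t ^ (-q - 1) * K) (x1 q α) :=
      gQ_hasDeriv hq ht0
    have h := HasDerivAt.of_local_left_inverse (x1_cont hq hα) hder hD.ne hev1
    have heq : (t ^ (-q - 1) * K)⁻¹ = t ^ (q + 1) / K := by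
      have hre : (t ^ (-q - 1) : ℝ) = (t ^ (q + 1))⁻¹ := by
        rw [← Real.rpow_neg ht0.le]
        congr 1; ring
      rw [hre, mul_inv, inv_inv, div_eq_mul_inv]
    rw [heq] at h
    exact ⟨h, div_neg_of_pos_of_neg (Real.rpow_pos_of_pos ht0 _) hKneg⟩

end AuxStmt12

/-- the roots x₀(α) < x₁(α) are differentiable in α on (0, α*(q)) with
dx_k/dα = x_k^{q+1}/(q - (q-2)x_k²); moreover dx₀/dα > 0 and dx₁/dα < 0. -/
theorem stmt_12 (q : ℝ) (hq : 2 < q) :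
    ∀ α ∈ Ioo (0 : ℝ) (alphaStar q),
      (HasDerivAt (x0 q) (x0 q α ^ (q + 1) / (q - (q - 2) * x0 q α ^ 2)) α ∧
        0 < x0 q α ^ (q + 1) / (q - (q - 2) * x0 q α ^ 2)) ∧
      (HasDerivAt (x1 q) (x1 q α ^ (q + 1) / (q - (q - 2) * x1 q α ^ 2)) α ∧
        x1 q α ^ (q + 1) / (q - (q - 2) * x1 q α ^ 2) < 0) := by
  exact stmt_12_aux q hq
end

section
/- Let q > 2. Then I_q(α) → +∞ as α → 0 from the right. -/
open Set Filter MeasureTheory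

lemma fQ_hasDerivAt (q : ℝ) (hq : 1 ≤ q) (α t : ℝ) :
    HasDerivAt (fQ q α) (2*t - α*(q*t^(q-1))) t := by
  have h1 : HasDerivAt (fun x : ℝ => x ^ (2:ℕ)) (2*t) t := by
    simpa using hasDerivAt_pow 2 t
  have h2 : HasDerivAt (fun x : ℝ => x ^ q) (q * t ^ (q-1)) t :=
    Real.hasDerivAt_rpow_const (Or.inr hq)
  have := (h1.sub_const 1).sub ((h2.const_mul α))
  have e : fQ q α = (fun x : ℝ => x ^ (2:ℕ) - 1) - fun y => α * y ^ q := by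
    funext x; simp [fQ]
  rw [e]; exact this

lemma fQ_cont (q : ℝ) (hq : 1 ≤ q) (α : ℝ) : Continuous (fQ q α) :=
  Differentiable.continuous (fun t => (fQ_hasDerivAt q hq α t).differentiableAt)

lemma rpow_split (t : ℝ) (ht : 0 < t) (q : ℝ) : t ^ q = t ^ (q-2) * t ^ (2:ℕ) := by
  rw [← Real.rpow_natCast t 2, ← Real.rpow_add ht]; norm_num

lemma rpow_split1 (t : ℝ) (ht : 0 < t) (q : ℝ) : t ^ (q-1) = t ^ (q-2) * t := by
  rw [show q - 1 = (q-2) + 1 by ring, Real.rpow_add ht, Real.rpow_one]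

-- f < 0 for 0 < t ≤ 1
lemma fQ_neg_small (q α t : ℝ) (hα : 0 < α) (ht : 0 < t) (ht1 : t ≤ 1) : fQ q α t < 0 := by
  have h1 : (0:ℝ) < t ^ q := Real.rpow_pos_of_pos ht q
  have h2 : t ^ (2:ℕ) ≤ 1 := by nlinarith
  simp only [fQ]; nlinarith

-- f < t^2
lemma fQ_lt_sq (q α t : ℝ) (hα : 0 < α) (ht : 0 < t) : fQ q α t < t ^ (2:ℕ) := by
  have h1 : (0:ℝ) < t ^ q := Real.rpow_pos_of_pos ht q
  simp only [fQ]; nlinarith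

-- f < 0 for α t^(q-2) ≥ 2
lemma fQ_neg_big (q α t : ℝ) (ht : 0 < t) (h2 : 2 ≤ α * t^(q-2)) : fQ q α t < 0 := by
  have h3 := rpow_split t ht q
  simp only [fQ, h3]
  nlinarith [sq_nonneg t, pow_pos ht 2]

-- value at 1 and positivity criteria
lemma fQ_one (q α : ℝ) : fQ q α 1 = -α := by simp [fQ, Real.one_rpow]

lemma fQ_pos_of (q α t : ℝ) (h1 : α * t^q ≤ 1) (h2 : 2 ≤ t) : 1 ≤ fQ q α t := by
  simp only [fQ]; nlinarith

lemma fQ_pos_of' (q α t u : ℝ) (hα : 0 < α) (ht : 0 < t) (hu : α * t^(q-2) ≤ u)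
    (h2 : 2 ≤ (1-u) * t^(2:ℕ)) : 1 ≤ fQ q α t := by
  have h3 := rpow_split t ht q
  simp only [fQ, h3]; nlinarith [pow_pos ht 2]

-- derivative lower bound on [1,2]
lemma fQ_deriv_lb (q α : ℝ) (hq : 2 < q) (hα : 0 < α) (hsmall : α*(q*2^(q-2)) ≤ 1/2)
    (t : ℝ) (ht1 : 1 ≤ t) (ht2 : t ≤ 2) : 1 ≤ 2*t - α*(q*t^(q-1)) := by
  have h0 : (0:ℝ) < t := by linarith
  have h1 : t^(q-1) ≤ 2^(q-1) := Real.rpow_le_rpow h0.le ht2 (by linarith)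
  have h2 : (2:ℝ)^(q-1) = 2^(q-2) * 2 := by
    rw [show q - 1 = (q-2) + 1 by ring, Real.rpow_add (by norm_num : (0:ℝ)<2), Real.rpow_one]
  have h3 : α*(q*t^(q-1)) ≤ α*(q*(2^(q-2)*2)) := by
    have hqpos : (0:ℝ) < q := by linarith
    rw [← h2]
    exact mul_le_mul_of_nonneg_left (mul_le_mul_of_nonneg_left h1 hqpos.le) hα.le
  nlinarith

-- derivative upper bound for t ≥ s with α q s^(q-2) large
lemma fQ_deriv_ub (q α : ℝ) (hq : 2 < q) (hα : 0 < α) (s t : ℝ) (hs1 : 1 ≤ s) (hst : s ≤ t)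
    (hbig : 2 + (q-2)/4 ≤ α*(q*s^(q-2))) :
    2*t - α*(q*t^(q-1)) ≤ -((q-2)/4) := by
  have h0 : (0:ℝ) < t := by linarith
  have h1 : s^(q-2) ≤ t^(q-2) := Real.rpow_le_rpow (by linarith) hst (by linarith)
  have h2 := rpow_split1 t h0 q
  have hqpos : (0:ℝ) < q := by linarith
  have h3 : α*(q*s^(q-2)) ≤ α*(q*t^(q-2)) := by
    exact mul_le_mul_of_nonneg_left (mul_le_mul_of_nonneg_left h1 hqpos.le) hα.le
  have h4 : 2 + (q-2)/4 ≤ α*(q*t^(q-2)) := le_trans hbig h3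
  have ht1 : 1 ≤ t := le_trans hs1 hst
  have : α*(q*t^(q-1)) = (α*(q*t^(q-2))) * t := by rw [h2]; ring
  rw [this]
  nlinarith

-- MVT lower bound, left root
lemma fQ_mvt_left (q α : ℝ) (hq1 : 1 ≤ q) (a b m : ℝ) (hm0 : 0 ≤ m)
    (hfa : fQ q α a = 0)
    (hm : ∀ c ∈ Ioo a b, m ≤ 2*c - α*(q*c^(q-1))) :
    ∀ t ∈ Icc a b, m * (t - a) ≤ fQ q α t := by
  intro t ht
  rcases eq_or_lt_of_le ht.1 with h | h
  · rw [← h, hfa]; simp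
  · obtain ⟨c, hc, hc2⟩ := exists_hasDerivAt_eq_slope (fQ q α) _ h
      ((fQ_cont q hq1 α).continuousOn) (fun x _ => fQ_hasDerivAt q hq1 α x)
    have hcm : m ≤ 2*c - α*(q*c^(q-1)) :=
      hm c ⟨hc.1, lt_of_lt_of_le hc.2 ht.2⟩
    rw [hfa] at hc2
    have h3 : 0 < t - a := by linarith
    rw [eq_div_iff (ne_of_gt h3)] at hc2
    nlinarith [hc2]

-- MVT lower bound, right root
lemma fQ_mvt_right (q α : ℝ) (hq1 : 1 ≤ q) (a b m : ℝ) (hm0 : 0 ≤ m)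
    (hfb : fQ q α b = 0)
    (hm : ∀ c ∈ Ioo a b, 2*c - α*(q*c^(q-1)) ≤ -m) :
    ∀ t ∈ Icc a b, m * (b - t) ≤ fQ q α t := by
  intro t ht
  rcases eq_or_lt_of_le ht.2 with h | h
  · rw [h, hfb]; simp
  · obtain ⟨c, hc, hc2⟩ := exists_hasDerivAt_eq_slope (fQ q α) _ h
      ((fQ_cont q hq1 α).continuousOn) (fun x _ => fQ_hasDerivAt q hq1 α x)
    have hcm : 2*c - α*(q*c^(q-1)) ≤ -m :=
      hm c ⟨lt_of_le_of_lt ht.1 hc.1, hc.2⟩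
    rw [hfb] at hc2
    have h3 : 0 < b - t := by linarith
    rw [eq_div_iff (ne_of_gt h3)] at hc2
    nlinarith [hc2]

lemma integrable_sub_rpow (a b : ℝ) :
    IntervalIntegrable (fun t => (t - a)^(-(1/2):ℝ)) volume a b := by
  have h := (intervalIntegral.intervalIntegrable_rpow' (a := 0) (b := b - a)
    (r := -(1/2)) (by norm_num)).comp_sub_right a
  simpa using h

lemma integrable_rsub_rpow (a b : ℝ) :
    IntervalIntegrable (fun t => (b - t)^(-(1/2):ℝ)) volume a b := by
  have h := (intervalIntegral.intervalIntegrable_rpow' (a := b - a) (b := 0)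
    (r := -(1/2)) (by norm_num)).comp_sub_left b
  simpa using h

-- measurability of the integrand
lemma g_meas (q α : ℝ) (hq1 : 1 ≤ q) (μ : Measure ℝ) :
    AEStronglyMeasurable (fun t => 1 / Real.sqrt (fQ q α t)) μ := by
  exact (measurable_const.div ((Real.continuous_sqrt.comp (fQ_cont q hq1 α)).measurable)).aestronglyMeasurable

lemma g_nonneg (q α t : ℝ) : 0 ≤ 1 / Real.sqrt (fQ q α t) :=
  div_nonneg zero_le_one (Real.sqrt_nonneg _)


lemma g_le_bound (q α t v : ℝ) (hv : 0 < v) (hlb : v ≤ fQ q α t) :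
    1 / Real.sqrt (fQ q α t) ≤ v ^ (-(1/2):ℝ) := by
  have h1 : Real.sqrt v ≤ Real.sqrt (fQ q α t) := Real.sqrt_le_sqrt hlb
  have h2 : 0 < Real.sqrt v := Real.sqrt_pos.2 hv
  calc 1 / Real.sqrt (fQ q α t) ≤ 1 / Real.sqrt v := one_div_le_one_div_of_le h2 h1
  _ = v ^ (-(1/2):ℝ) := by rw [Real.sqrt_eq_rpow, Real.rpow_neg hv.le, one_div]

lemma x1_facts (q a s : ℝ) (hq : 2 < q) (e1 : a * s = s - 1) (hs : 0 < s)
    (hsq : 2*q/(q-2) ≤ s) : a ≤ 1 ∧ 2 + (q-2)/2 ≤ q * a := by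
  have hp : (0:ℝ) < q - 2 := by linarith
  constructor
  · nlinarith
  · have h1 : (q-2)/2 * (2*q/(q-2)) = q := by field_simp
    have h2 : (q-2)/2 * (2*q/(q-2)) ≤ (q-2)/2 * s := by
      apply mul_le_mul_of_nonneg_left hsq (by positivity)
    nlinarith

set_option maxHeartbeats 2000000 in
lemma key (q : ℝ) (hq : 2 < q) (C : ℝ) : ∃ ε > 0, ∀ α ∈ Ioo (0:ℝ) ε, C ≤ Iq q α := by
  have hq1 : (1:ℝ) ≤ q := by linarith
  have hp : 0 < q - 2 := by linarith
  obtain ⟨r, hrdef⟩ : ∃ r : ℝ, r = (8+(q-2))/(8+2*(q-2)) := ⟨_, rfl⟩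
  have hr0 : 0 < r := by rw [hrdef]; positivity
  have hr1 : r < 1 := by rw [hrdef, div_lt_one (by linarith)]; linarith
  have h1r : 0 < 1 - r := by linarith
  obtain ⟨θ, hθdef⟩ : ∃ θ : ℝ, θ = r ^ ((q-2)⁻¹ : ℝ) := ⟨_, rfl⟩
  have hθ0 : 0 < θ := hθdef ▸ Real.rpow_pos_of_pos hr0 _
  have hθ1 : θ < 1 := hθdef ▸ Real.rpow_lt_one hr0.le hr1 (by positivity)
  have hθp : θ ^ (q-2) = r := by rw [hθdef]; exact Real.rpow_inv_rpow hr0.le (ne_of_gt hp)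
  obtain ⟨M, hMdef⟩ : ∃ M : ℝ, M = 2 * Real.exp (max C 0) := ⟨_, rfl⟩
  have hM2 : 2 ≤ M := by
    have : (1:ℝ) ≤ Real.exp (max C 0) := Real.one_le_exp (le_max_right _ _)
    nlinarith
  obtain ⟨T, hTdef⟩ : ∃ T : ℝ, T = M + Real.sqrt (2/(1-r)) := ⟨_, rfl⟩
  have hTM : M ≤ T := hTdef ▸ le_add_of_nonneg_right (Real.sqrt_nonneg _)
  have hT2 : 2 ≤ T := le_trans hM2 hTM
  have hTsq : 2/(1-r) ≤ T^2 := by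
    rw [hTdef]
    have h1 : Real.sqrt (2/(1-r)) ^ 2 = 2/(1-r) := Real.sq_sqrt (by positivity : (0:ℝ) ≤ 2/(1-r))
    nlinarith [Real.sqrt_nonneg (2/(1-r)), hM2]
  obtain ⟨X0, hX0def⟩ : ∃ X0 : ℝ, X0 = Real.sqrt (2*q/(q-2)) := ⟨_, rfl⟩
  have hX00 : 0 ≤ X0 := hX0def ▸ Real.sqrt_nonneg _
  obtain ⟨X, hXdef⟩ : ∃ X : ℝ, X = (T + X0 + 2)/θ := ⟨_, rfl⟩
  have hXpos : 0 < X := by rw [hXdef]; positivity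
  have hθX : θ * X = T + X0 + 2 := by rw [hXdef]; field_simp
  have hXT : T + X0 + 2 ≤ X := by
    rw [hXdef, le_div_iff₀ hθ0]; nlinarith
  have hX4 : 4 ≤ X := by linarith
  refine ⟨min (1/X^q) (1/(2*q*2^q)), by positivity, fun α hα => ?_⟩
  obtain ⟨hα0, hαε⟩ := hα
  have hαX : α * X^q < 1 := by
    have := lt_of_lt_of_le hαε (min_le_left _ _)
    rw [lt_div_iff₀ (by positivity)] at this; linarith
  have hα2 : α * (q * 2^(q-2)) ≤ 1/2 := by
    have h1 := lt_of_lt_of_le hαε (min_le_right _ _)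
    rw [lt_div_iff₀ (by positivity)] at h1
    have h2 : (2:ℝ)^(q-2) ≤ 2^q :=
      Real.rpow_le_rpow_left_iff (by norm_num) |>.2 (by linarith)
    nlinarith [Real.rpow_pos_of_pos (show (0:ℝ) < 2 by norm_num) (q-2)]
  set S : Set ℝ := {t : ℝ | 0 < t ∧ fQ q α t = 0} with hSdef
  have cont : Continuous (fQ q α) := fQ_cont q hq1 α
  have hS_gt1 : ∀ t ∈ S, 1 < t := by
    intro t ht
    by_contra h
    push_neg at h
    exact absurd ht.2 (ne_of_lt (fQ_neg_small q α t hα0 ht.1 h))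
  have hf1 : fQ q α 1 < 0 := by rw [fQ_one]; linarith
  have h2X : (2:ℝ)^q ≤ X^q := Real.rpow_le_rpow (by norm_num) (by linarith) (by linarith)
  have hf2 : (0:ℝ) < fQ q α 2 := by
    have h1 : α * (2:ℝ)^q ≤ α * X^q :=
      mul_le_mul_of_nonneg_left h2X hα0.le
    have := fQ_pos_of q α 2 (by linarith) le_rfl
    linarith
  obtain ⟨t12, ht12mem, ht12⟩ : ∃ t ∈ Ioo (1:ℝ) 2, fQ q α t = 0 := by
    obtain ⟨t, htm, hte⟩ := intermediate_value_Ioo (by norm_num : (1:ℝ) ≤ 2)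
      cont.continuousOn ⟨hf1, hf2⟩
    exact ⟨t, htm, hte⟩
  have ht12S : t12 ∈ S := ⟨by linarith [ht12mem.1], ht12⟩
  have hSne : S.Nonempty := ⟨t12, ht12S⟩
  have hSbb : BddBelow S := ⟨1, fun t ht => (hS_gt1 t ht).le⟩
  obtain ⟨B, hBdef⟩ : ∃ B : ℝ, B = max X ((2/α) ^ ((q-2)⁻¹ : ℝ)) + 1 := ⟨_, rfl⟩
  have hBX : X < B := by have := le_max_left X ((2/α) ^ ((q-2)⁻¹:ℝ)); linarith
  have hB0 : 0 < B := lt_trans hXpos hBX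
  have hBp : 2/α ≤ B^(q-2) := by
    have h1 : (2/α) ^ ((q-2)⁻¹:ℝ) ≤ B := by
      have := le_max_right X ((2/α) ^ ((q-2)⁻¹:ℝ)); linarith
    calc 2/α = ((2/α) ^ ((q-2)⁻¹:ℝ)) ^ (q-2) :=
          (Real.rpow_inv_rpow (by positivity) (ne_of_gt hp)).symm
    _ ≤ B ^ (q-2) := Real.rpow_le_rpow (by positivity) h1 hp.le
  have hnegB : ∀ t : ℝ, B ≤ t → fQ q α t < 0 := by
    intro t ht
    have ht0 : 0 < t := lt_of_lt_of_le hB0 ht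
    have h1 : 2/α ≤ t^(q-2) := le_trans hBp (Real.rpow_le_rpow hB0.le ht hp.le)
    have h2 : 2 ≤ α * t^(q-2) := by rw [div_le_iff₀ hα0] at h1; linarith [mul_comm α (t^(q-2))]
    exact fQ_neg_big q α t ht0 h2
  have hSba : BddAbove S := by
    refine ⟨B, fun t ht => ?_⟩
    by_contra h
    push_neg at h
    exact absurd ht.2 (ne_of_lt (hnegB t h.le))
  have hSclosed : IsClosed S := by
    have hSeq : S = (fQ q α) ⁻¹' {0} ∩ Ici 1 := by
      ext t
      constructor
      · intro ht; exact ⟨ht.2, (hS_gt1 t ht).le⟩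
      · rintro ⟨h1, h2⟩; exact ⟨by linarith [mem_Ici.1 h2], h1⟩
    rw [hSeq]
    exact (isClosed_singleton.preimage cont).inter isClosed_Ici
  obtain ⟨y0, hy0def⟩ : ∃ y0 : ℝ, y0 = x0 q α := ⟨_, rfl⟩
  obtain ⟨y1, hy1def⟩ : ∃ y1 : ℝ, y1 = x1 q α := ⟨_, rfl⟩
  have hx0S : y0 ∈ S := by rw [hy0def]; exact hSclosed.csInf_mem hSne hSbb
  have hx1S : y1 ∈ S := by rw [hy1def]; exact hSclosed.csSup_mem hSne hSba
  have hy0_gt1 : 1 < y0 := hS_gt1 _ hx0S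
  have hy0_le2 : y0 ≤ 2 := by rw [hy0def]; exact le_trans (csInf_le hSbb ht12S) ht12mem.2.le
  have hfX : (0:ℝ) < fQ q α X := by
    have := fQ_pos_of q α X (by linarith) (by linarith)
    linarith
  obtain ⟨tX, htXmem, htXz⟩ : ∃ t ∈ Ioo X B, fQ q α t = 0 := by
    obtain ⟨t, htm, hte⟩ := intermediate_value_Ioo' (le_of_lt hBX)
      cont.continuousOn ⟨hnegB B le_rfl, hfX⟩
    exact ⟨t, htm, hte⟩
  have hy1X : X < y1 := by
    rw [hy1def]
    exact lt_of_lt_of_le htXmem.1 (le_csSup hSba ⟨lt_trans hXpos htXmem.1, htXz⟩)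
  have hy1pos : 0 < y1 := by linarith
  have hθy1ge : T + X0 + 2 ≤ θ * y1 := by
    rw [← hθX]
    exact mul_le_mul_of_nonneg_left hy1X.le hθ0.le
  have hθy1le : θ * y1 ≤ y1 := by
    have h := mul_le_mul_of_nonneg_right hθ1.le hy1pos.le
    rwa [one_mul] at h
  have hTθ : T ≤ θ * y1 := by linarith
  have hMθ : M ≤ θ * y1 := le_trans hTM hTθ
  have h2θ : 2 ≤ θ * y1 := le_trans hT2 hTθ
  -- identity at y1
  have hfy1 : fQ q α y1 = 0 := hx1S.2
  have e1 : α * y1^(q-2) * y1^(2:ℕ) = y1^(2:ℕ) - 1 := by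
    have h3 := rpow_split y1 hy1pos q
    simp only [fQ, h3] at hfy1
    linarith
  have hy1sq : 2*q/(q-2) ≤ y1^(2:ℕ) := by
    have h1 : X0 ≤ y1 := by linarith
    have h2 : X0^2 = 2*q/(q-2) := by rw [hX0def]; exact Real.sq_sqrt (by positivity)
    have h3 : X0^2 ≤ y1^2 := pow_le_pow_left₀ hX00 h1 2
    linarith
  obtain ⟨ha1, hbig1'⟩ := x1_facts q (α * y1^(q-2)) (y1^(2:ℕ)) hq e1 (pow_pos hy1pos 2) hy1sq
  have hbig1 : 2 + (q-2)/2 ≤ α*(q*y1^(q-2)) := by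
    rw [show α*(q*y1^(q-2)) = q*(α*y1^(q-2)) by ring]
    exact hbig1'
  have hbigθ : 2 + (q-2)/4 ≤ α*(q*(θ*y1)^(q-2)) := by
    have h1 : (θ*y1)^(q-2) = r * y1^(q-2) := by
      rw [Real.mul_rpow hθ0.le hy1pos.le, hθp]
    rw [h1]
    have h2 : r * (2 + (q-2)/2) ≤ r * (α*(q*y1^(q-2))) :=
      mul_le_mul_of_nonneg_left hbig1 hr0.le
    have h3 : r * (2 + (q-2)/2) = 2 + (q-2)/4 := by
      rw [hrdef]; field_simp; ring
    rw [show α*(q*(r * y1^(q-2))) = r*(α*(q*y1^(q-2))) by ring]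
    linarith
  -- pointwise lower bounds on fQ
  have hJ : ∀ t ∈ Icc y0 2, 1 * (t - y0) ≤ fQ q α t :=
    fQ_mvt_left q α hq1 y0 2 1 zero_le_one hx0S.2
      (fun c hc => fQ_deriv_lb q α hq hα0 hα2 c (by linarith [hc.1]) hc.2.le)
  have hK : ∀ t ∈ Icc 2 (θ*y1), 1 ≤ fQ q α t := by
    intro t ht
    rcases le_total t T with h | h
    · have h1 : t^q ≤ X^q :=
        Real.rpow_le_rpow (by linarith [ht.1]) (by linarith) (by linarith)
      have h2 : α * t^q ≤ α * X^q := mul_le_mul_of_nonneg_left h1 hα0.le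
      exact fQ_pos_of q α t (by linarith) ht.1
    · have ht0 : (0:ℝ) < t := by linarith [ht.1]
      have h1 : t^(q-2) ≤ (θ*y1)^(q-2) := Real.rpow_le_rpow ht0.le ht.2 hp.le
      have h2 : (θ*y1)^(q-2) = r * y1^(q-2) := by
        rw [Real.mul_rpow hθ0.le hy1pos.le, hθp]
      have h3 : α * t^(q-2) ≤ r := by
        have h31 := mul_le_mul_of_nonneg_left h1 hα0.le
        rw [h2] at h31
        have h32 : α * (r * y1^(q-2)) = r * (α * y1^(q-2)) := by ring
        have h33 : r * (α * y1^(q-2)) ≤ r * 1 := mul_le_mul_of_nonneg_left ha1 hr0.le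
        rw [h32] at h31
        linarith
      refine fQ_pos_of' q α t r hα0 ht0 h3 ?_
      have h4 : T^2 ≤ t^2 := pow_le_pow_left₀ (by linarith) h 2
      have h5 : 2 ≤ (1-r) * T^2 := by
        rw [div_le_iff₀ h1r] at hTsq; linarith
      have h6 : (1-r) * T^2 ≤ (1-r) * t^2 := mul_le_mul_of_nonneg_left h4 h1r.le
      linarith
  have hL : ∀ t ∈ Icc (θ*y1) y1, (q-2)/4 * (y1 - t) ≤ fQ q α t :=
    fQ_mvt_right q α hq1 (θ*y1) y1 ((q-2)/4) (by positivity) hfy1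
      (fun c hc => fQ_deriv_ub q α hq hα0 (θ*y1) c (by linarith) hc.1.le hbigθ)
  -- integrability
  set g : ℝ → ℝ := fun t => 1 / Real.sqrt (fQ q α t) with hgdef
  have hgm : ∀ μ : Measure ℝ, AEStronglyMeasurable g μ := fun μ => g_meas q α hq1 μ
  have I1 : IntervalIntegrable g volume y0 2 := by
    refine (integrable_sub_rpow y0 2).mono_fun (hgm _) ?_
    rw [Set.uIoc_of_le hy0_le2]
    refine (ae_restrict_iff' measurableSet_Ioc).2 (ae_of_all _ fun t ht => ?_)
    simp only [hgdef]
    have hv : 0 < t - y0 := by linarith [ht.1]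
    have hlb : t - y0 ≤ fQ q α t := by
      have := hJ t ⟨ht.1.le, ht.2⟩; linarith
    rw [Real.norm_of_nonneg (g_nonneg q α t),
        Real.norm_of_nonneg (Real.rpow_nonneg hv.le _)]
    exact g_le_bound q α t (t - y0) hv hlb
  have I2 : IntervalIntegrable g volume 2 (θ*y1) := by
    refine (intervalIntegrable_const (c := (1:ℝ))).mono_fun (hgm _) ?_
    rw [Set.uIoc_of_le h2θ]
    refine (ae_restrict_iff' measurableSet_Ioc).2 (ae_of_all _ fun t ht => ?_)
    simp only [hgdef]
    have h1 : 1 ≤ fQ q α t := hK t ⟨ht.1.le, ht.2⟩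
    have h2 : 1 ≤ Real.sqrt (fQ q α t) := Real.one_le_sqrt.2 h1
    rw [Real.norm_of_nonneg (g_nonneg q α t), norm_one]
    calc 1 / Real.sqrt (fQ q α t) ≤ 1/1 := one_div_le_one_div_of_le one_pos h2
    _ = 1 := by norm_num
  have I3 : IntervalIntegrable g volume (θ*y1) y1 := by
    have hbase : IntervalIntegrable
        (fun t => ((q-2)/4) ^ (-(1/2):ℝ) * (y1 - t)^(-(1/2):ℝ)) volume (θ*y1) y1 :=
      (integrable_rsub_rpow (θ*y1) y1).const_mul _
    refine hbase.mono_fun (hgm _) ?_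
    rw [Set.uIoc_of_le (by linarith : θ*y1 ≤ y1)]
    refine (ae_restrict_iff' measurableSet_Ioc).2 (ae_of_all _ fun t ht => ?_)
    simp only [hgdef]
    have hv0 : 0 ≤ y1 - t := by linarith [ht.2]
    rw [Real.norm_of_nonneg (g_nonneg q α t),
        Real.norm_of_nonneg (by positivity : (0:ℝ) ≤ ((q-2)/4) ^ (-(1/2):ℝ) * (y1 - t)^(-(1/2):ℝ))]
    rcases eq_or_lt_of_le ht.2 with he | hlt
    · have hfz : fQ q α t = 0 := by rw [he]; exact hfy1
      simp only [hfz, Real.sqrt_zero, div_zero]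
      positivity
    · have hv : 0 < y1 - t := by linarith
      have hlb : (q-2)/4 * (y1 - t) ≤ fQ q α t := hL t ⟨ht.1.le, ht.2⟩
      have h1 := g_le_bound q α t ((q-2)/4 * (y1 - t)) (by positivity) hlb
      have h2 : ((q-2)/4 * (y1 - t)) ^ (-(1/2):ℝ)
          = ((q-2)/4) ^ (-(1/2):ℝ) * (y1 - t)^(-(1/2):ℝ) :=
        Real.mul_rpow (by positivity) hv.le
      rw [h2] at h1
      exact h1
  have Itot : IntervalIntegrable g volume y0 y1 := (I1.trans I2).trans I3
  -- comparison
  have step1 : ∫ t in (2:ℝ)..M, g t ≤ ∫ t in y0..y1, g t :=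
    intervalIntegral.integral_mono_interval hy0_le2 hM2 (by linarith)
      (ae_of_all _ fun t => g_nonneg q α t) Itot
  have hsub : Set.uIcc (2:ℝ) M ⊆ Set.uIcc y0 y1 := by
    rw [Set.uIcc_of_le hM2, Set.uIcc_of_le (by linarith : y0 ≤ y1)]
    exact Icc_subset_Icc hy0_le2 (by linarith)
  have intg1 : IntervalIntegrable (fun t : ℝ => 1/t) volume 2 M := by
    apply ContinuousOn.intervalIntegrable
    apply ContinuousOn.div continuousOn_const continuousOn_id
    intro t ht
    rw [Set.uIcc_of_le hM2] at ht
    simp only [id_eq]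
    intro h
    rw [h] at ht
    linarith [ht.1]
  have step2 : ∫ t in (2:ℝ)..M, 1/t ≤ ∫ t in (2:ℝ)..M, g t := by
    refine intervalIntegral.integral_mono_on hM2 intg1 (Itot.mono_set hsub) fun t ht => ?_
    have ht2 : (2:ℝ) ≤ t := ht.1
    have ht0 : (0:ℝ) < t := by linarith
    have h1 : fQ q α t < t^(2:ℕ) := fQ_lt_sq q α t hα0 ht0
    have h2 : 1 ≤ fQ q α t := hK t ⟨ht.1, by linarith [ht.2]⟩
    have h3 : Real.sqrt (fQ q α t) ≤ t := by
      calc Real.sqrt (fQ q α t) ≤ Real.sqrt (t^(2:ℕ)) := Real.sqrt_le_sqrt h1.le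
      _ = t := Real.sqrt_sq ht0.le
    have h4 : 0 < Real.sqrt (fQ q α t) := Real.sqrt_pos.2 (by linarith)
    exact one_div_le_one_div_of_le h4 h3
  have step3 : ∫ t in (2:ℝ)..M, 1/t = Real.log (M/2) :=
    integral_one_div (by
      rw [Set.uIcc_of_le hM2]
      intro h
      exact absurd h.1 (by norm_num))
  have hlog : Real.log (M/2) = max C 0 := by
    rw [hMdef]
    rw [show 2 * Real.exp (max C 0) / 2 = Real.exp (max C 0) by ring, Real.log_exp]
  have : C ≤ Real.log (M/2) := by rw [hlog]; exact le_max_left _ _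
  calc C ≤ Real.log (M/2) := this
  _ = ∫ t in (2:ℝ)..M, 1/t := step3.symm
  _ ≤ ∫ t in (2:ℝ)..M, g t := step2
  _ ≤ ∫ t in y0..y1, g t := step1
  _ = Iq q α := by rw [hgdef, hy0def, hy1def]; rfl


/-- for q > 2, I_q(α) → +∞ as α → 0⁺. -/
theorem stmt_15 (q : ℝ) (hq : 2 < q) :
    Tendsto (Iq q) (nhdsWithin 0 (Ioi (0 : ℝ))) atTop := by
  rw [tendsto_atTop]
  intro C
  obtain ⟨ε, hε, h⟩ := key q hq C
  have hmem : Ioo (0:ℝ) ε ∈ nhdsWithin 0 (Ioi (0:ℝ)) :=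
    Ioo_mem_nhdsGT_of_mem ⟨le_rfl, hε⟩
  exact Filter.eventually_of_mem hmem h
end

section
/- Let q > 2 and α ∈ (0, α*(q)). Then there exists a point t̂ ∈ (x₀(α), x₁(α)) such that I_q(α) = π·√(-2/f''(t̂)), where f(t) = t² - 1 - α t^q (note f''(t̂) < 0). -/
open Set Filter MeasureTheory Topology

section Aux

lemma weight_hasDerivAt {a b t : ℝ} (hab : a < b) (ht : t ∈ Ioo a b) :
    HasDerivAt (fun t => Real.arcsin ((2*t - a - b)/(b - a)))
      (1 / Real.sqrt ((t - a) * (b - t))) t := by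
  have hd : (0:ℝ) < b - a := by linarith
  have hu : HasDerivAt (fun t : ℝ => (2*t - a - b)/(b - a)) (2/(b-a)) t := by
    have h1 : HasDerivAt (fun t : ℝ => 2*t - a - b) 2 t := by
      simpa using (((hasDerivAt_id t).const_mul 2).sub_const a).sub_const b
    exact h1.div_const _
  have hw : 0 < (t - a) * (b - t) := mul_pos (by linarith [ht.1]) (by linarith [ht.2])
  set u := (2*t - a - b)/(b - a) with hu_def
  have hune : u ≠ -1 := by
    intro h; rw [div_eq_iff hd.ne'] at h; nlinarith [ht.1]
  have hune' : u ≠ 1 := by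
    intro h; rw [div_eq_iff hd.ne'] at h; nlinarith [ht.2]
  have harc := (Real.hasDerivAt_arcsin hune hune').comp t hu
  refine harc.congr_deriv ?_
  have h1u : 1 - u^2 = (2/(b-a))^2 * ((t - a) * (b - t)) := by
    rw [hu_def]; field_simp; ring
  rw [h1u, Real.sqrt_mul (sq_nonneg _), Real.sqrt_sq (by positivity : (0:ℝ) ≤ 2/(b-a))]
  have hsw : 0 < Real.sqrt ((t - a) * (b - t)) := Real.sqrt_pos.mpr hw
  field_simp

lemma weight_cont (a b : ℝ) : Continuous (fun t : ℝ => Real.arcsin ((2*t - a - b)/(b - a))) :=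
  Real.continuous_arcsin.comp (by fun_prop)

lemma weight_intervalIntegrable {a b : ℝ} (hab : a < b) :
    IntervalIntegrable (fun t => 1 / Real.sqrt ((t - a) * (b - t))) volume a b := by
  have hc := weight_cont a b
  rw [intervalIntegrable_iff, uIoc_of_le hab.le]
  apply intervalIntegral.integrableOn_deriv_of_nonneg
  · exact hc.continuousOn
  · exact fun x hx => weight_hasDerivAt hab hx
  · intro x hx; positivity

lemma weight_integral {a b : ℝ} (hab : a < b) :
    ∫ t in a..b, 1 / Real.sqrt ((t - a) * (b - t)) = Real.pi := by
  have hc := weight_cont a b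
  rw [intervalIntegral.integral_eq_sub_of_hasDeriv_right_of_le hab.le
    hc.continuousOn
    (fun x hx => (weight_hasDerivAt hab hx).hasDerivWithinAt)
    (weight_intervalIntegrable hab)]
  have hd : (0:ℝ) < b - a := by linarith
  have h1 : (2*b - a - b)/(b - a) = 1 := by field_simp; ring
  have h2 : (2*a - a - b)/(b - a) = -1 := by field_simp; ring
  rw [h1, h2, Real.arcsin_one, Real.arcsin_neg_one]
  ring

lemma dd_mvt {f f' f'' : ℝ → ℝ} {a b t : ℝ} (hab : a < b) (ht : t ∈ Ioo a b)
    (hd1 : ∀ x ∈ Icc a b, HasDerivAt f (f' x) x)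
    (hd2 : ∀ x ∈ Icc a b, HasDerivAt f' (f'' x) x)
    (ha : f a = 0) (hb : f b = 0) :
    ∃ ξ ∈ Ioo a b, f t = f'' ξ / 2 * ((t - a) * (t - b)) := by
  obtain ⟨hta, htb⟩ := ht
  have hw : (t - a) * (t - b) ≠ 0 :=
    mul_ne_zero (by linarith) (by linarith)
  set K := f t / ((t - a) * (t - b)) with hK
  set g : ℝ → ℝ := fun s => f s - K * ((s - a) * (s - b)) with hg
  have hgd : ∀ x ∈ Icc a b, HasDerivAt g (f' x - K * (2 * x - a - b)) x := by
    intro x hx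
    have hq : HasDerivAt (fun s : ℝ => (s - a) * (s - b)) (2 * x - a - b) x := by
      have := ((hasDerivAt_id x).sub_const a).mul ((hasDerivAt_id x).sub_const b)
      exact this.congr_deriv (by simp only [id_eq]; ring)
    exact (hd1 x hx).sub (hq.const_mul K)
  have hgd2 : ∀ x ∈ Icc a b, HasDerivAt (fun s => f' s - K * (2 * s - a - b)) (f'' x - 2 * K) x := by
    intro x hx
    have hl : HasDerivAt (fun s : ℝ => 2 * s - a - b) 2 x := by
      simpa using (((hasDerivAt_id x).const_mul 2).sub_const a).sub_const b
    have := (hd2 x hx).sub (hl.const_mul K)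
    exact this.congr_deriv (by ring)
  have hga : g a = 0 := by simp [hg, ha]
  have hgb : g b = 0 := by simp [hg, hb]
  have hgt : g t = 0 := by
    simp only [hg, hK]
    rw [div_mul_cancel₀ _ hw, sub_self]
  have hcont : ∀ {c d : ℝ}, c ∈ Icc a b → d ∈ Icc a b → ContinuousOn g (Icc c d) := by
    intro c d hc hd
    intro x hx
    exact ((hgd x ⟨le_trans hc.1 hx.1, le_trans hx.2 hd.2⟩).continuousAt).continuousWithinAt
  have htmem : t ∈ Icc a b := ⟨hta.le, htb.le⟩
  obtain ⟨ξ₁, hξ₁, hξ₁0⟩ := exists_hasDerivAt_eq_zero hta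
    (hcont (left_mem_Icc.mpr hab.le) htmem) (hga.trans hgt.symm)
    (fun x hx => hgd x ⟨hx.1.le, le_trans hx.2.le htb.le⟩)
  obtain ⟨ξ₂, hξ₂, hξ₂0⟩ := exists_hasDerivAt_eq_zero htb
    (hcont htmem (right_mem_Icc.mpr hab.le)) (hgt.trans hgb.symm)
    (fun x hx => hgd x ⟨le_trans hta.le hx.1.le, hx.2.le⟩)
  have hsub : Icc ξ₁ ξ₂ ⊆ Icc a b := Icc_subset_Icc (by linarith [hξ₁.1]) (by linarith [hξ₂.2])
  obtain ⟨ξ, hξ, hξ0⟩ := exists_hasDerivAt_eq_zero (show ξ₁ < ξ₂ by linarith [hξ₁.2, hξ₂.1])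
    (fun x hx => ((hgd2 x (hsub hx)).continuousAt).continuousWithinAt)
    (hξ₁0.trans hξ₂0.symm)
    (fun x hx => hgd2 x (hsub (Ioo_subset_Icc_self hx)))
  refine ⟨ξ, ⟨by linarith [hξ.1, hξ₁.1], by linarith [hξ.2, hξ₂.2]⟩, ?_⟩
  have hKξ : K = f'' ξ / 2 := by linarith [hξ0]
  rw [← hKξ, hK]
  rw [div_mul_cancel₀ _ hw]

lemma hasDerivAt_fQ (q α : ℝ) {t : ℝ} (ht : t ≠ 0) :
    HasDerivAt (fQ q α) (fQd1 q α t) t := by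
  have h1 : HasDerivAt (fun t : ℝ => t ^ (2:ℕ)) (2 * t) t := by
    simpa using hasDerivAt_pow 2 t
  have h2 : HasDerivAt (fun t : ℝ => t ^ q) (q * t ^ (q - 1)) t :=
    Real.hasDerivAt_rpow_const (Or.inl ht)
  have h := (h1.sub_const 1).sub (h2.const_mul α)
  have he : fQ q α = fun t : ℝ => t ^ (2:ℕ) - 1 - α * t ^ q := rfl
  rw [he]
  refine h.congr_deriv ?_
  unfold fQd1; ring

lemma hasDerivAt_fQd1 (q α : ℝ) {t : ℝ} (ht : t ≠ 0) :
    HasDerivAt (fQd1 q α) (fQd2 q α t) t := by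
  have h1 : HasDerivAt (fun t : ℝ => 2 * t) 2 t := by
    simpa using (hasDerivAt_id t).const_mul 2
  have h2 : HasDerivAt (fun t : ℝ => t ^ (q-1)) ((q-1) * t ^ (q - 2)) t := by
    have := Real.hasDerivAt_rpow_const (p := q - 1) (Or.inl ht)
    convert this using 2; ring
  have h := h1.sub ((h2.const_mul (α * q)))
  have he : fQd1 q α = fun t : ℝ => 2 * t - α * q * t ^ (q - 1) := rfl
  rw [he]
  refine h.congr_deriv ?_
  unfold fQd2; ring

lemma continuousAt_fQ (q α : ℝ) {x : ℝ} (hx : x ≠ 0) : ContinuousAt (fQ q α) x := by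
  have : ContinuousAt (fun t : ℝ => t ^ (2:ℕ) - 1 - α * t ^ q) x :=
    (((continuous_pow 2).continuousAt).sub continuousAt_const).sub
      (continuousAt_const.mul (Real.continuousAt_rpow_const x q (Or.inl hx)))
  exact this

end Aux

set_option maxHeartbeats 1600000 in
/-- there is t̂ ∈ (x₀, x₁) with f''(t̂) < 0 and I_q(α) = π·√(-2/f''(t̂)). -/
theorem stmt_16 (q α : ℝ) (hq : 2 < q) (hα : α ∈ Ioo (0 : ℝ) (alphaStar q)) :
    ∃ that ∈ Ioo (x0 q α) (x1 q α),
      fQd2 q α that < 0 ∧ Iq q α = Real.pi * Real.sqrt (-2 / fQd2 q α that) := by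
  obtain ⟨hα0, hαs⟩ := hα
  have hq0 : (0:ℝ) < q := by linarith
  have hq2 : (0:ℝ) < q - 2 := by linarith
  have hq1 : (1:ℝ) < q - 1 := by linarith
  -- splitting powers
  have hsplit2 : ∀ t : ℝ, 0 < t → t ^ q = t ^ (q-2) * t ^ (2:ℕ) := by
    intro t ht
    rw [← Real.rpow_natCast t 2, ← Real.rpow_add ht]
    norm_num
  have hsplit1 : ∀ t : ℝ, 0 < t → t ^ (q-1) = t ^ (q-2) * t := by
    intro t ht
    rw [show q - 1 = (q-2) + 1 by ring, Real.rpow_add ht, Real.rpow_one]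
  -- the critical point
  have hXpos : (0:ℝ) < 2/(α*q) := by positivity
  set tstar : ℝ := (2/(α*q)) ^ ((q-2)⁻¹ : ℝ) with htstar_def
  have htp : 0 < tstar := Real.rpow_pos_of_pos hXpos _
  have hts_pow : tstar ^ (q-2) = 2/(α*q) := by
    rw [htstar_def, ← Real.rpow_mul hXpos.le, inv_mul_cancel₀ hq2.ne', Real.rpow_one]
  -- alphaStar reformulation
  set P : ℝ := (q/(q-2)) ^ ((q-2)/2) with hP_def
  have hcpos : (0:ℝ) < q/(q-2) := by positivity
  have hPpos : 0 < P := Real.rpow_pos_of_pos hcpos _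
  have hstar_eq : alphaStar q = 2/(q*P) := by
    unfold alphaStar
    have hbase : (0:ℝ) < (q-2)/q := by positivity
    have hsplit : (q:ℝ)/2 = (q-2)/2 + 1 := by ring
    rw [hsplit, Real.rpow_add hbase, Real.rpow_one,
      show ((q-2)/q : ℝ) = (q/(q-2))⁻¹ from (inv_div q (q-2)).symm,
      Real.inv_rpow hcpos.le, ← hP_def]
    field_simp
  have hX : P < 2/(α*q) := by
    rw [hstar_eq] at hαs
    rw [lt_div_iff₀ (by positivity)]
    have h2 : α * (q * P) < 2 := by
      rw [lt_div_iff₀ (by positivity)] at hαs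
      linarith
    linarith [h2]
  -- tstar^2 > q/(q-2)
  have htsq : q/(q-2) < tstar ^ (2:ℕ) := by
    have h1 : tstar ^ (2:ℕ) = (2/(α*q)) ^ (((q-2)⁻¹ : ℝ) * 2) := by
      rw [htstar_def, ← Real.rpow_natCast ((2/(α*q)) ^ ((q-2)⁻¹ : ℝ)) 2, ← Real.rpow_mul hXpos.le]
      norm_num
    have h2 : P ^ (((q-2)⁻¹ : ℝ) * 2) < (2/(α*q)) ^ (((q-2)⁻¹ : ℝ) * 2) :=
      Real.rpow_lt_rpow hPpos.le hX (by positivity)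
    have h3 : P ^ (((q-2)⁻¹ : ℝ) * 2) = q/(q-2) := by
      rw [hP_def, ← Real.rpow_mul hcpos.le]
      have : (q-2)/2 * ((q-2)⁻¹ * 2) = 1 := by field_simp
      rw [this, Real.rpow_one]
    rw [h1, ← h3]
    exact h2
  have hfstar : 0 < fQ q α tstar := by
    have h1 : α * tstar ^ q = 2/q * tstar ^ (2:ℕ) := by
      rw [hsplit2 tstar htp, hts_pow]
      field_simp
    show 0 < tstar ^ 2 - 1 - α * tstar ^ q
    rw [h1]
    have hts2 : 0 < tstar ^ (2:ℕ) := by positivity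
    rw [div_lt_iff₀ hq2] at htsq
    have key : q * (tstar^(2:ℕ) - 1 - 2/q*tstar^(2:ℕ)) = tstar^(2:ℕ)*(q-2) - q := by
      field_simp; ring
    have h2 : 0 < q * (tstar^(2:ℕ) - 1 - 2/q*tstar^(2:ℕ)) := by rw [key]; linarith [htsq]
    by_contra hcon
    push_neg at hcon
    nlinarith [h2, hq0, hcon]
  -- the root set
  set S : Set ℝ := {t : ℝ | 0 < t ∧ fQ q α t = 0} with hS_def
  have hroot_gt1 : ∀ t ∈ S, 1 < t := by
    rintro t ⟨ht0, htf⟩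
    have hrq : 0 < t ^ q := Real.rpow_pos_of_pos ht0 q
    have htf' : t ^ (2:ℕ) - 1 - α * t ^ q = 0 := htf
    nlinarith [mul_pos hα0 hrq]
  have hroot_pow : ∀ t ∈ S, t ^ (q-2) < α⁻¹ := by
    rintro t ⟨ht0, htf⟩
    have h1 : 1 < t := hroot_gt1 t ⟨ht0, htf⟩
    have htf' : t ^ (2:ℕ) - 1 - α * t ^ q = 0 := htf
    rw [hsplit2 t ht0] at htf'
    have ht2 : 0 < t ^ (2:ℕ) := by positivity
    rw [show (α⁻¹ : ℝ) = 1/α from (one_div α).symm, lt_div_iff₀ hα0]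
    nlinarith [ht2, htf']
  -- S is closed
  have hS_eq : S = Ici (1:ℝ) ∩ fQ q α ⁻¹' {0} := by
    ext t
    constructor
    · rintro ⟨ht0, htf⟩
      exact ⟨(hroot_gt1 t ⟨ht0, htf⟩).le, htf⟩
    · rintro ⟨ht1, htf⟩
      have : (1:ℝ) ≤ t := ht1
      exact ⟨by linarith, htf⟩
  have hS_closed : IsClosed S := by
    rw [hS_eq]
    exact ContinuousOn.preimage_isClosed_of_isClosed
      (fun x hx => (continuousAt_fQ q α (by
        have : (1:ℝ) ≤ x := hx
        linarith)).continuousWithinAt)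
      isClosed_Ici isClosed_singleton
  have hts1 : 1 < tstar := by
    have h1 : (1:ℝ) < q/(q-2) := by rw [lt_div_iff₀ hq2]; linarith
    nlinarith [htsq, htp]
  have hcontIcc : ∀ {c d : ℝ}, 0 < c → ContinuousOn (fQ q α) (Icc c d) := by
    intro c d hc x hx
    exact (continuousAt_fQ q α (by intro h; rw [h] at hx; exact absurd hx.1 (not_le.mpr hc))).continuousWithinAt
  have hf1 : fQ q α 1 = -α := by
    show (1:ℝ)^2 - 1 - α * (1:ℝ)^q = -α
    rw [Real.one_rpow]; ring
  obtain ⟨r₁, hr₁I, hr₁f⟩ := intermediate_value_Ioo hts1.le (hcontIcc one_pos)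
    (show (0:ℝ) ∈ Ioo (fQ q α 1) (fQ q α tstar) from ⟨by rw [hf1]; linarith, hfstar⟩)
  set T : ℝ := max (tstar+1) ((2/α) ^ ((q-2)⁻¹ : ℝ)) with hT_def
  have hT_ts : tstar < T := lt_of_lt_of_le (lt_add_one tstar) (le_max_left _ _)
  have hT0 : 0 < T := htp.trans hT_ts
  have hT_pow : 2/α ≤ T ^ (q-2) := by
    have h0 : (0:ℝ) ≤ (2/α) ^ ((q-2)⁻¹ : ℝ) := (Real.rpow_pos_of_pos (by positivity) _).le
    have h1 : ((2/α) ^ ((q-2)⁻¹:ℝ)) ^ (q-2) ≤ T ^ (q-2) :=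
      Real.rpow_le_rpow h0 (le_max_right _ _) hq2.le
    rwa [← Real.rpow_mul (by positivity : (0:ℝ) ≤ 2/α), inv_mul_cancel₀ hq2.ne',
      Real.rpow_one] at h1
  have hfT : fQ q α T < 0 := by
    show T^2 - 1 - α * T^q < 0
    rw [hsplit2 T hT0]
    have hT2 : 0 < T^(2:ℕ) := by positivity
    rw [div_le_iff₀ hα0] at hT_pow
    nlinarith [hT2, hT_pow]
  obtain ⟨r₂, hr₂I, hr₂f⟩ := intermediate_value_Ioo' hT_ts.le (hcontIcc htp)
    (show (0:ℝ) ∈ Ioo (fQ q α T) (fQ q α tstar) from ⟨hfT, hfstar⟩)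
  have hr₁S : r₁ ∈ S := ⟨by linarith [hr₁I.1], hr₁f⟩
  have hr₂S : r₂ ∈ S := ⟨by linarith [hr₂I.1, htp], hr₂f⟩
  have hSne : S.Nonempty := ⟨r₁, hr₁S⟩
  have hbddB : BddBelow S := ⟨0, fun t ht => ht.1.le⟩
  have hbddA : BddAbove S := by
    refine ⟨(α⁻¹) ^ ((q-2)⁻¹ : ℝ), fun t ht => ?_⟩
    have h1 := hroot_pow t ht
    have ht0 : 0 < t := ht.1
    have h2 : (t ^ (q-2)) ^ ((q-2)⁻¹:ℝ) ≤ (α⁻¹) ^ ((q-2)⁻¹:ℝ) :=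
      Real.rpow_le_rpow (by positivity) h1.le (by positivity)
    rwa [← Real.rpow_mul ht0.le, mul_inv_cancel₀ hq2.ne', Real.rpow_one] at h2
  set a : ℝ := x0 q α with ha_def
  set b : ℝ := x1 q α with hb_def
  have haS : a ∈ S := hS_closed.csInf_mem hSne hbddB
  have hbS : b ∈ S := hS_closed.csSup_mem hSne hbddA
  have ha0 : 0 < a := haS.1
  have haf : fQ q α a = 0 := haS.2
  have hb0 : 0 < b := hbS.1
  have hbf : fQ q α b = 0 := hbS.2
  have ha1 : 1 < a := hroot_gt1 a haS
  have hats : a < tstar := lt_of_le_of_lt (csInf_le hbddB hr₁S) hr₁I.2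
  have htsb : tstar < b := lt_of_lt_of_le hr₂I.1 (le_csSup hbddA hr₂S)
  have hab : a < b := hats.trans htsb
  -- derivative signs
  have hαq : 0 < α * q := mul_pos hα0 hq0
  have hfd1_pos : ∀ x : ℝ, 0 < x → x < tstar → 0 < fQd1 q α x := by
    intro x hx0 hxt
    have hxp : x^(q-2) < tstar^(q-2) := Real.rpow_lt_rpow hx0.le hxt hq2
    rw [hts_pow] at hxp
    have he : fQd1 q α x = 2*x - α*q*(x^(q-2)*x) := by
      show 2*x - α*q*x^(q-1) = _
      rw [hsplit1 x hx0]
    rw [he]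
    have h2 : α*q*x^(q-2) < 2 := by
      have h3 := (mul_lt_mul_iff_right₀ hαq).mpr hxp
      have heq : α*q*(2/(α*q)) = 2 := by field_simp
      rw [heq] at h3
      exact h3
    nlinarith [hx0, h2]
  have hfd1_neg : ∀ x : ℝ, tstar < x → fQd1 q α x < 0 := by
    intro x hxt
    have hx0 : 0 < x := htp.trans hxt
    have hxp : tstar^(q-2) < x^(q-2) := Real.rpow_lt_rpow htp.le hxt hq2
    rw [hts_pow] at hxp
    have he : fQd1 q α x = 2*x - α*q*(x^(q-2)*x) := by
      show 2*x - α*q*x^(q-1) = _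
      rw [hsplit1 x hx0]
    rw [he]
    have h2 : 2 < α*q*x^(q-2) := by
      have h3 := (mul_lt_mul_iff_right₀ hαq).mpr hxp
      have heq : α*q*(2/(α*q)) = 2 := by field_simp
      rw [heq] at h3
      exact h3
    nlinarith [hx0, h2]
  -- monotonicity and positivity on (a,b)
  have hmono : StrictMonoOn (fQ q α) (Icc 1 tstar) := by
    apply strictMonoOn_of_deriv_pos (convex_Icc _ _) (hcontIcc one_pos)
    intro x hx
    rw [interior_Icc] at hx
    rw [(hasDerivAt_fQ q α (by linarith [hx.1] : x ≠ 0)).deriv]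
    exact hfd1_pos x (by linarith [hx.1]) hx.2
  have hanti : StrictAntiOn (fQ q α) (Ici tstar) := by
    apply strictAntiOn_of_deriv_neg (convex_Ici _)
    · intro x hx
      exact (continuousAt_fQ q α (by
        have := mem_Ici.mp hx; intro h; rw [h] at this; linarith)).continuousWithinAt
    · intro x hx
      rw [interior_Ici] at hx
      rw [(hasDerivAt_fQ q α (by have := mem_Ioi.mp hx; intro h; rw [h] at this; linarith)).deriv]
      exact hfd1_neg x hx
  have hfpos : ∀ t ∈ Ioo a b, 0 < fQ q α t := by
    rintro t ⟨hta, htb⟩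
    rcases le_or_gt t tstar with h | h
    · have := hmono ⟨ha1.le, hats.le⟩ ⟨by linarith, h⟩ hta
      rw [haf] at this; exact this
    · have := hanti (mem_Ici.mpr h.le) (mem_Ici.mpr htsb.le) htb
      rw [hbf] at this; exact this
  -- second derivative facts
  have hfd2b : fQd2 q α b < 0 := by
    have h1 := hfd1_neg b htsb
    have he : fQd1 q α b = 2*b - α*q*(b^(q-2)*b) := by
      show 2*b - α*q*b^(q-1) = _
      rw [hsplit1 b hb0]
    rw [he] at h1
    have hbp : 0 < b^(q-2) := Real.rpow_pos_of_pos hb0 _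
    have h2 : 2 < α*q*b^(q-2) := by nlinarith [hb0, h1]
    show 2 - α*q*(q-1)*b^(q-2) < 0
    nlinarith [hbp, h2, hq1]
  have hfd2_anti : ∀ x y : ℝ, 0 < x → x < y → fQd2 q α y < fQd2 q α x := by
    intro x y hx0 hxy
    have hxp : x^(q-2) < y^(q-2) := Real.rpow_lt_rpow hx0.le hxy hq2
    show 2 - α*q*(q-1)*y^(q-2) < 2 - α*q*(q-1)*x^(q-2)
    have : 0 < α*q*(q-1) := by positivity
    nlinarith [hxp, this]
  -- pointwise quadratic bounds via divided-difference MVT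
  have hba : 0 < b - a := sub_pos.mpr hab
  have hderiv1 : ∀ x ∈ Icc a b, HasDerivAt (fQ q α) (fQd1 q α x) x := by
    intro x hx
    exact hasDerivAt_fQ q α (by intro h; rw [h] at hx; linarith [hx.1])
  have hderiv2 : ∀ x ∈ Icc a b, HasDerivAt (fQd1 q α) (fQd2 q α x) x := by
    intro x hx
    exact hasDerivAt_fQd1 q α (by intro h; rw [h] at hx; linarith [hx.1])
  have hMVT : ∀ t ∈ Ioo a b, ∃ ξ ∈ Ioo a b,
      fQ q α t = (-fQd2 q α ξ/2) * ((t - a) * (b - t)) := by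
    intro t ht
    obtain ⟨ξ, hξ, heq⟩ := dd_mvt hab ht hderiv1 hderiv2 haf hbf
    exact ⟨ξ, hξ, by rw [heq]; ring⟩
  have hB_pos : 0 < -fQd2 q α b/2 := by linarith [hfd2b]
  have hup : ∀ t ∈ Ioo a b, fQ q α t < (-fQd2 q α b/2) * ((t - a) * (b - t)) := by
    intro t ht
    obtain ⟨ξ, hξ, heq⟩ := hMVT t ht
    have h1 : fQd2 q α b < fQd2 q α ξ := hfd2_anti ξ b (by linarith [hξ.1]) hξ.2
    have hw : 0 < (t - a) * (b - t) := mul_pos (sub_pos.mpr ht.1) (sub_pos.mpr ht.2)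
    rw [heq]
    apply mul_lt_mul_of_pos_right _ hw
    linarith
  have hlo : ∀ t ∈ Ioo a b, (-fQd2 q α a/2) * ((t - a) * (b - t)) < fQ q α t := by
    intro t ht
    obtain ⟨ξ, hξ, heq⟩ := hMVT t ht
    have h1 : fQd2 q α ξ < fQd2 q α a := hfd2_anti a ξ ha0 hξ.1
    have hw : 0 < (t - a) * (b - t) := mul_pos (sub_pos.mpr ht.1) (sub_pos.mpr ht.2)
    rw [heq]
    apply mul_lt_mul_of_pos_right _ hw
    linarith
  -- the continuous extension of fQ/(weight) to [a,b], and its positive minimum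
  set H : ℝ → ℝ := fun t => if t = a then fQd1 q α a / (b - a)
    else if t = b then -fQd1 q α b / (b - a)
    else fQ q α t / ((t - a) * (b - t)) with hH_def
  have hfd1a : 0 < fQd1 q α a := hfd1_pos a ha0 hats
  have hfd1b : fQd1 q α b < 0 := hfd1_neg b htsb
  have hH_pos : ∀ t ∈ Icc a b, 0 < H t := by
    intro t ht
    rcases eq_or_ne t a with rfl | h1
    · rw [hH_def]; simp only [if_pos rfl]
      exact div_pos hfd1a hba
    rcases eq_or_ne t b with rfl | h2
    · rw [hH_def]; simp only [if_neg h1, if_pos rfl]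
      exact div_pos (by linarith) hba
    · have htI : t ∈ Ioo a b := ⟨lt_of_le_of_ne ht.1 (Ne.symm h1), lt_of_le_of_ne ht.2 h2⟩
      rw [hH_def]; simp only [if_neg h1, if_neg h2]
      exact div_pos (hfpos t htI) (mul_pos (sub_pos.mpr htI.1) (sub_pos.mpr htI.2))
  have hH_cont : ContinuousOn H (Icc a b) := by
    intro x hx
    rcases eq_or_ne x a with rfl | hxa
    · rw [← continuousWithinAt_diff_self]
      have hHa : H a = fQd1 q α a * (b - a)⁻¹ := by
        simp [hH_def, div_eq_mul_inv]
      unfold ContinuousWithinAt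
      rw [hHa]
      have hslope : Tendsto (fun t => fQ q α t / (t - a)) (𝓝[Icc a b \ {a}] a)
          (𝓝 (fQd1 q α a)) := by
        have h0 := hasDerivAt_iff_tendsto_slope.mp (hasDerivAt_fQ q α ha0.ne')
        have heqf : (fun t => fQ q α t / (t - a)) = slope (fQ q α) a := by
          funext t; rw [slope_def_field, haf, sub_zero]
        rw [heqf]
        exact h0.mono_left (nhdsWithin_mono a (fun y hy => hy.2))
      have hrest : Tendsto (fun t : ℝ => (b - t)⁻¹) (𝓝[Icc a b \ {a}] a) (𝓝 ((b - a)⁻¹)) := by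
        apply Tendsto.mono_left _ nhdsWithin_le_nhds
        refine ((continuous_const.sub continuous_id).continuousAt).inv₀ ?_
        simp only [Pi.sub_apply, id_eq]
        intro h; rw [sub_eq_zero] at h; exact hab.ne' h
      refine Tendsto.congr' ?_ (hslope.mul hrest)
      have hne_b : ∀ᶠ t in 𝓝[Icc a b \ {a}] a, t ≠ b :=
        (eventually_ne_nhds hab.ne).filter_mono nhdsWithin_le_nhds
      filter_upwards [self_mem_nhdsWithin, hne_b] with t htm htb
      have htne : t ≠ a := htm.2
      rw [hH_def]; simp only [if_neg htne, if_neg htb]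
      rw [← div_eq_mul_inv, div_div]
    rcases eq_or_ne x b with rfl | hxb
    · rw [← continuousWithinAt_diff_self]
      have hHb : H b = fQd1 q α b * (-(b - a)⁻¹) := by
        simp [hH_def, hxa]
        ring
      unfold ContinuousWithinAt
      rw [hHb]
      have hslope : Tendsto (fun t => fQ q α t / (t - b)) (𝓝[Icc a b \ {b}] b)
          (𝓝 (fQd1 q α b)) := by
        have h0 := hasDerivAt_iff_tendsto_slope.mp (hasDerivAt_fQ q α hb0.ne')
        have heqf : (fun t => fQ q α t / (t - b)) = slope (fQ q α) b := by
          funext t; rw [slope_def_field, hbf, sub_zero]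
        rw [heqf]
        exact h0.mono_left (nhdsWithin_mono b (fun y hy => hy.2))
      have hrest : Tendsto (fun t : ℝ => -(t - a)⁻¹) (𝓝[Icc a b \ {b}] b) (𝓝 (-(b - a)⁻¹)) := by
        apply Tendsto.mono_left _ nhdsWithin_le_nhds
        refine (((continuous_id.sub continuous_const).continuousAt).inv₀ ?_).neg
        simp only [Pi.sub_apply, id_eq]
        intro h; rw [sub_eq_zero] at h; exact hab.ne' h
      refine Tendsto.congr' ?_ (hslope.mul hrest)
      have hne_a : ∀ᶠ t in 𝓝[Icc a b \ {b}] b, t ≠ a :=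
        (eventually_ne_nhds hab.ne').filter_mono nhdsWithin_le_nhds
      filter_upwards [self_mem_nhdsWithin, hne_a] with t htm hta
      have htne : t ≠ b := htm.2
      rw [hH_def]; simp only [if_neg hta, if_neg htne]
      rw [mul_neg, ← div_eq_mul_inv, div_div, ← div_neg]
      congr 1
      ring
    · -- interior point
      have hxI : x ∈ Ioo a b := ⟨lt_of_le_of_ne hx.1 (Ne.symm hxa), lt_of_le_of_ne hx.2 hxb⟩
      apply ContinuousAt.continuousWithinAt
      have hwne : (x - a) * (b - x) ≠ 0 :=
        (mul_pos (sub_pos.mpr hxI.1) (sub_pos.mpr hxI.2)).ne'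
      have hrat : ContinuousAt (fun t => fQ q α t / ((t - a) * (b - t))) x := by
        apply ContinuousAt.div (continuousAt_fQ q α (by intro h; rw [h] at hxI; linarith [hxI.1]))
        · exact ((continuous_id.sub continuous_const).mul
            (continuous_const.sub continuous_id)).continuousAt
        · exact hwne
      apply hrat.congr
      have hev : ∀ᶠ t in 𝓝 x, t ≠ a ∧ t ≠ b :=
        (eventually_ne_nhds hxa).and (eventually_ne_nhds hxb)
      filter_upwards [hev] with t ⟨hta, htb⟩
      rw [hH_def]; simp only [if_neg hta, if_neg htb]
  obtain ⟨t₀, ht₀, hmin⟩ := isCompact_Icc.exists_isMinOn (nonempty_Icc.mpr hab.le) hH_cont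
  set m : ℝ := H t₀ with hm_def
  have hm_pos : 0 < m := hH_pos t₀ ht₀
  have hflow : ∀ t ∈ Ioo a b, m * ((t - a) * (b - t)) ≤ fQ q α t := by
    intro t ht
    have hne1 : t ≠ a := ne_of_gt ht.1
    have hne2 : t ≠ b := ne_of_lt ht.2
    have hwpos : 0 < (t - a) * (b - t) := mul_pos (sub_pos.mpr ht.1) (sub_pos.mpr ht.2)
    have hHt : H t = fQ q α t / ((t - a) * (b - t)) := by
      rw [hH_def]; simp only [if_neg hne1, if_neg hne2]
    have h1 : m ≤ H t := hmin (Ioo_subset_Icc_self ht)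
    rw [hHt, le_div_iff₀ hwpos] at h1
    linarith [h1]
  -- integrability
  have hWint : IntervalIntegrable (fun t => 1/Real.sqrt ((t - a) * (b - t))) volume a b :=
    weight_intervalIntegrable hab
  have hWintIoo : IntegrableOn (fun t => 1/Real.sqrt ((t - a) * (b - t))) (Ioo a b) := by
    have h := hWint
    rw [intervalIntegrable_iff, uIoc_of_le hab.le, integrableOn_Ioc_iff_integrableOn_Ioo] at h
    exact h
  have hFcontOn : ContinuousOn (fun t => 1 / Real.sqrt (fQ q α t)) (Ioo a b) := by
    intro x hx
    have h1 : ContinuousAt (fun t => Real.sqrt (fQ q α t)) x :=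
      Real.continuous_sqrt.continuousAt.comp
        (continuousAt_fQ q α (by intro h; rw [h] at hx; linarith [hx.1]))
    exact ((continuousAt_const.div h1 (Real.sqrt_pos.mpr (hfpos x hx)).ne')).continuousWithinAt
  have hFint : IntervalIntegrable (fun t => 1 / Real.sqrt (fQ q α t)) volume a b := by
    rw [intervalIntegrable_iff, uIoc_of_le hab.le, integrableOn_Ioc_iff_integrableOn_Ioo]
    apply Integrable.mono' (hWintIoo.const_mul ((Real.sqrt m)⁻¹))
      (hFcontOn.aestronglyMeasurable measurableSet_Ioo)
    rw [ae_restrict_iff' measurableSet_Ioo]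
    refine Eventually.of_forall (fun t ht => ?_)
    have hwpos : 0 < (t - a) * (b - t) := mul_pos (sub_pos.mpr ht.1) (sub_pos.mpr ht.2)
    have hmw : 0 < m * ((t - a) * (b - t)) := mul_pos hm_pos hwpos
    have h1 : Real.sqrt (m * ((t - a) * (b - t))) ≤ Real.sqrt (fQ q α t) :=
      Real.sqrt_le_sqrt (hflow t ht)
    have h2 : 0 < Real.sqrt (m * ((t - a) * (b - t))) := Real.sqrt_pos.mpr hmw
    rw [Real.norm_eq_abs, abs_of_nonneg (by positivity)]
    calc 1 / Real.sqrt (fQ q α t) ≤ 1 / Real.sqrt (m * ((t - a) * (b - t))) :=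
          one_div_le_one_div_of_le h2 h1
      _ = (Real.sqrt m)⁻¹ * (1 / Real.sqrt ((t - a) * (b - t))) := by
          rw [Real.sqrt_mul hm_pos.le, one_div, mul_inv, one_div]
  -- strict lower bound: π/√B < I
  set B : ℝ := -fQd2 q α b / 2 with hB_def
  set A : ℝ := -fQd2 q α a / 2 with hA_def
  have hsqB : 0 < Real.sqrt B := Real.sqrt_pos.mpr hB_pos
  have hIlb : Real.pi * (Real.sqrt B)⁻¹ < ∫ t in a..b, 1 / Real.sqrt (fQ q α t) := by
    have hint2 : IntervalIntegrable
        (fun t => (Real.sqrt B)⁻¹ * (1/Real.sqrt ((t - a) * (b - t)))) volume a b :=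
      hWint.const_mul _
    have hpos := intervalIntegral.intervalIntegral_pos_of_pos_on (hFint.sub hint2) (fun t ht => by
      have hwpos : 0 < (t - a) * (b - t) := mul_pos (sub_pos.mpr ht.1) (sub_pos.mpr ht.2)
      have hfp := hfpos t ht
      have hlt := hup t ht
      have hBw : 0 < B * ((t - a) * (b - t)) := mul_pos hB_pos hwpos
      have hs1 : Real.sqrt (fQ q α t) < Real.sqrt (B * ((t - a) * (b - t))) :=
        Real.sqrt_lt_sqrt hfp.le hlt
      have h2 : 1/Real.sqrt (B * ((t - a) * (b - t))) < 1/Real.sqrt (fQ q α t) :=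
        one_div_lt_one_div_of_lt (Real.sqrt_pos.mpr hfp) hs1
      have h3 : 1/Real.sqrt (B * ((t - a) * (b - t)))
          = (Real.sqrt B)⁻¹ * (1/Real.sqrt ((t - a) * (b - t))) := by
        rw [Real.sqrt_mul hB_pos.le, one_div, mul_inv, one_div]
      rw [← h3]
      linarith) hab
    rw [intervalIntegral.integral_sub hFint hint2,
      intervalIntegral.integral_const_mul, weight_integral hab] at hpos
    linarith [hpos]
  have hAc_aux : 0 < A →
      (∫ t in a..b, 1 / Real.sqrt (fQ q α t)) < Real.pi * (Real.sqrt A)⁻¹ := by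
    intro hA_pos
    have hsqA : 0 < Real.sqrt A := Real.sqrt_pos.mpr hA_pos
    have hint2 : IntervalIntegrable
        (fun t => (Real.sqrt A)⁻¹ * (1/Real.sqrt ((t - a) * (b - t)))) volume a b :=
      hWint.const_mul _
    have hpos := intervalIntegral.intervalIntegral_pos_of_pos_on (hint2.sub hFint) (fun t ht => by
      have hwpos : 0 < (t - a) * (b - t) := mul_pos (sub_pos.mpr ht.1) (sub_pos.mpr ht.2)
      have hfp := hfpos t ht
      have hlt := hlo t ht
      have hAw : 0 < A * ((t - a) * (b - t)) := mul_pos hA_pos hwpos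
      have hs1 : Real.sqrt (A * ((t - a) * (b - t))) < Real.sqrt (fQ q α t) :=
        Real.sqrt_lt_sqrt hAw.le hlt
      have h2 : 1/Real.sqrt (fQ q α t) < 1/Real.sqrt (A * ((t - a) * (b - t))) :=
        one_div_lt_one_div_of_lt (Real.sqrt_pos.mpr hAw) hs1
      have h3 : 1/Real.sqrt (A * ((t - a) * (b - t)))
          = (Real.sqrt A)⁻¹ * (1/Real.sqrt ((t - a) * (b - t))) := by
        rw [Real.sqrt_mul hA_pos.le, one_div, mul_inv, one_div]
      rw [← h3]
      linarith) hab
    rw [intervalIntegral.integral_sub hint2 hFint,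
      intervalIntegral.integral_const_mul, weight_integral hab] at hpos
    linarith [hpos]
  -- conclude via intermediate value theorem
  set I : ℝ := ∫ t in a..b, 1 / Real.sqrt (fQ q α t) with hI_def
  have hI_pos : 0 < I := lt_trans (mul_pos Real.pi_pos (inv_pos.mpr hsqB)) hIlb
  set c : ℝ := (Real.pi / I)^2 with hc_def
  have hc_pos : 0 < c := by
    have := Real.pi_pos
    positivity
  have hcB : c < B := by
    have h1 : Real.pi / I < Real.sqrt B := by
      rw [div_lt_iff₀ hI_pos]
      calc Real.pi = Real.pi * (Real.sqrt B)⁻¹ * Real.sqrt B := by field_simp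
        _ < I * Real.sqrt B := mul_lt_mul_of_pos_right hIlb hsqB
        _ = Real.sqrt B * I := mul_comm _ _
    calc c = (Real.pi/I)^2 := rfl
      _ < (Real.sqrt B)^2 := by
          apply pow_lt_pow_left₀ h1 (by positivity)
          norm_num
      _ = B := Real.sq_sqrt hB_pos.le
  have hAc : A < c := by
    rcases le_or_gt A 0 with h | hA_pos
    · linarith [hc_pos]
    · have h2 := hAc_aux hA_pos
      have hsqA : 0 < Real.sqrt A := Real.sqrt_pos.mpr hA_pos
      have h1 : Real.sqrt A < Real.pi / I := by
        rw [lt_div_iff₀ hI_pos]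
        calc Real.sqrt A * I = I * Real.sqrt A := mul_comm _ _
          _ < Real.pi * (Real.sqrt A)⁻¹ * Real.sqrt A := mul_lt_mul_of_pos_right h2 hsqA
          _ = Real.pi := by field_simp
      calc A = (Real.sqrt A)^2 := (Real.sq_sqrt hA_pos.le).symm
        _ < (Real.pi/I)^2 := by
            apply pow_lt_pow_left₀ h1 hsqA.le
            norm_num
        _ = c := rfl
  have hφcont : ContinuousOn (fun t => -fQd2 q α t / 2) (Icc a b) := by
    intro x hx
    have hx0 : x ≠ 0 := by intro h; rw [h] at hx; linarith [hx.1]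
    have h1 : ContinuousAt (fun t : ℝ => -(2 - α*q*(q-1)*t^(q-2))/2) x :=
      ((continuousAt_const.sub (continuousAt_const.mul
        (Real.continuousAt_rpow_const x (q-2) (Or.inl hx0)))).neg).div_const 2
    exact h1.continuousWithinAt
  obtain ⟨ξ, hξI, hξeq⟩ := intermediate_value_Ioo hab.le hφcont
    (show c ∈ Ioo (-fQd2 q α a / 2) (-fQd2 q α b / 2) from ⟨hAc, hcB⟩)
  refine ⟨ξ, hξI, ?_, ?_⟩
  · have h1 : -fQd2 q α ξ / 2 = c := hξeq
    linarith [hc_pos]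
  · have hd2 : fQd2 q α ξ = -2*c := by
      have h1 : -fQd2 q α ξ / 2 = c := hξeq
      linarith
    have hIqI : Iq q α = I := rfl
    rw [hIqI, hd2]
    have h1 : (-2:ℝ)/(-2*c) = c⁻¹ := by
      rw [div_eq_iff (by positivity : (-2*c:ℝ) ≠ 0)]
      field_simp
    rw [h1, hc_def]
    have h2 : (((Real.pi/I)^2)⁻¹ : ℝ) = (I/Real.pi)^2 := by
      rw [← inv_pow, inv_div]
    rw [h2, Real.sqrt_sq (by positivity : (0:ℝ) ≤ I/Real.pi)]
    field_simp
end

section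
/- Let q > 3 and α ∈ (0, α*(q)), and define g₂(t) = 2 t f'(t) + (q-1) f(t), where f(t) = t² - 1 - α t^q. Then g₂(x₀(α)) > 0, g₂(x₁(α)) < 0, and g₂ changes sign exactly once on [x₀(α), x₁(α)]: there exists a unique c ∈ (x₀(α), x₁(α)) with g₂ > 0 on [x₀(α), c) and g₂ < 0 on (c, x₁(α)]. -/
open Set Filter MeasureTheory

section Aux

noncomputable def Mfun (q t : ℝ) : ℝ := (t ^ 2 - 1) * t ^ (-q)

lemma key_ineq {q l : ℝ} (hq : 3 < q) (hl : 1 < l) :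
    (q + 3) * l ^ 2 < 4 * l ^ q + (q - 1) := by
  have hq0 : (0:ℝ) < q := by linarith
  have hl0 : (0:ℝ) ≤ l := by linarith
  have hlq0 : (0:ℝ) ≤ l ^ q := Real.rpow_nonneg hl0 q
  have hamgm : (l ^ q) ^ (2/q) * (1:ℝ) ^ ((q-2)/q) ≤ (2/q) * l ^ q + ((q-2)/q) * 1 :=
    Real.geom_mean_le_arith_mean2_weighted (by positivity)
      (div_nonneg (by linarith) hq0.le) hlq0 zero_le_one (by field_simp; ring)
  have h1 : (l ^ q) ^ (2/q) = l ^ (2:ℕ) := by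
    rw [← Real.rpow_mul hl0, mul_div_cancel₀ _ hq0.ne', ← Real.rpow_natCast l 2]
    norm_num
  rw [h1, Real.one_rpow, mul_one, mul_one] at hamgm
  have hlq1 : 1 < l ^ q := Real.one_lt_rpow_iff_of_pos (by linarith) |>.mpr (Or.inl ⟨hl, hq0⟩)
  have key : (q+3) * l^2 ≤ (q+3) * ((2/q) * l ^ q + (q-2)/q) :=
    mul_le_mul_of_nonneg_left hamgm (by linarith)
  have e : (q+3) * ((2/q) * l ^ q + (q-2)/q) = ((q+3) * (2 * l ^ q + (q-2))) / q := by
    field_simp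
  have h3 : ((q+3) * (2 * l ^ q + (q-2))) / q < 4 * l ^ q + (q - 1) := by
    rw [div_lt_iff₀ hq0]
    nlinarith [mul_pos (sub_pos.mpr hq) (sub_pos.mpr hlq1)]
  rw [e] at key
  linarith

lemma stays_neg {q α u v : ℝ} (hq : 3 < q) (hα : 0 < α) (hu : 1 < u) (huv : u < v)
    (h : (q+3) * u ^ 2 - (q-1) ≤ α * (3*q-1) * u ^ q) :
    (q+3) * v ^ 2 - (q-1) < α * (3*q-1) * v ^ q := by
  have hu0 : (0:ℝ) < u := by linarith
  set l := v / u with hl_def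
  have hl : 1 < l := (one_lt_div hu0).mpr huv
  have hv : v = u * l := by rw [hl_def, mul_div_cancel₀ _ hu0.ne']
  have hvq : v ^ q = u ^ q * l ^ q := by
    rw [hv, Real.mul_rpow hu0.le (by linarith : (0:ℝ) ≤ l)]
  have hl2q : l ^ (2:ℕ) ≤ l ^ q := by
    calc l ^ (2:ℕ) = l ^ ((2:ℕ):ℝ) := (Real.rpow_natCast l 2).symm
    _ ≤ l ^ q := Real.rpow_le_rpow_of_exponent_le hl.le (by push_cast; linarith)
  have hkey := key_ineq hq hl
  have hlq0 : (0:ℝ) < l ^ q := Real.rpow_pos_of_pos (by linarith) q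
  have hu2 : 1 ≤ u ^ 2 := by nlinarith
  have step1 : ((q+3) * u ^ 2 - (q-1)) * l ^ q ≤ α * (3*q-1) * v ^ q := by
    rw [hvq, ← mul_assoc]
    exact mul_le_mul_of_nonneg_right h hlq0.le
  have step2 : (q+3) * v ^ 2 - (q-1) < ((q+3) * u ^ 2 - (q-1)) * l ^ q := by
    have hv2 : v ^ 2 = u ^ 2 * l ^ 2 := by rw [hv]; ring
    rw [hv2]
    have h4 : (q+3) * (l ^ q - l ^ 2) > (q-1) * (l ^ q - 1) := by nlinarith
    nlinarith [mul_le_mul_of_nonneg_left hl2q (by linarith : (0:ℝ) ≤ q + 3),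
      mul_le_mul_of_nonneg_right hu2 (mul_nonneg (by linarith : (0:ℝ) ≤ q+3)
        (by nlinarith : (0:ℝ) ≤ l ^ q - l ^ 2))]
  linarith

lemma Mfun_hasDeriv {q t : ℝ} (ht : 0 < t) :
    HasDerivAt (Mfun q) (t ^ (-q-1) * ((2-q) * t ^ 2 + q)) t := by
  have h1 : HasDerivAt (fun s : ℝ => s ^ 2 - 1) (2 * t) t := by
    simpa using (hasDerivAt_pow 2 t).sub_const 1
  have h2 : HasDerivAt (fun s : ℝ => s ^ (-q)) (-q * t ^ (-q-1)) t := by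
    simpa using Real.hasDerivAt_rpow_const (x := t) (p := -q) (Or.inl ht.ne')
  have h := h1.mul h2
  convert h using 1
  case e'_4 => rfl
  case e'_5 => rfl
  case e'_8 => rfl
  have ht1 : t ^ (-q) = t ^ (-q-1) * t := by
    rw [← Real.rpow_add_one ht.ne' (-q-1)]; ring_nf
  rw [ht1]; ring

lemma Mfun_contAt {q t : ℝ} (ht : 0 < t) : ContinuousAt (Mfun q) t :=
  (Mfun_hasDeriv ht).continuousAt

lemma Mfun_strictMonoOn {q : ℝ} (hq : 3 < q) :
    StrictMonoOn (Mfun q) (Icc 1 (Real.sqrt (q / (q-2)))) := by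
  have hq2 : (0:ℝ) < q - 2 := by linarith
  have hr1 : 1 < q / (q-2) := (one_lt_div hq2).mpr (by linarith)
  apply strictMonoOn_of_deriv_pos (convex_Icc _ _)
  · exact fun t ht => (Mfun_contAt (lt_of_lt_of_le one_pos ht.1)).continuousWithinAt
  · intro t ht
    rw [interior_Icc] at ht
    have ht0 : 0 < t := lt_trans one_pos ht.1
    rw [(Mfun_hasDeriv ht0).deriv]
    have ht2 : t ^ 2 < q / (q-2) := by
      have := Real.sq_sqrt (le_of_lt (lt_trans one_pos hr1))
      nlinarith [ht.2, Real.sqrt_pos.mpr (lt_trans one_pos hr1), ht.1]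
    have : (2-q) * t ^ 2 + q > 0 := by
      have h2 : (2-q) * t ^ 2 > (2-q) * (q/(q-2)) := by
        apply mul_lt_mul_of_neg_left ht2 (by linarith)
      have h3 : (2-q) * (q/(q-2)) = -q := by field_simp; ring
      linarith
    positivity

lemma Mfun_strictAntiOn {q : ℝ} (hq : 3 < q) :
    StrictAntiOn (Mfun q) (Ici (Real.sqrt (q / (q-2)))) := by
  have hq2 : (0:ℝ) < q - 2 := by linarith
  have hr1 : 1 < q / (q-2) := (one_lt_div hq2).mpr (by linarith)
  have hs1 : 1 < Real.sqrt (q / (q-2)) := by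
    rw [show (1:ℝ) = Real.sqrt 1 by simp]
    exact Real.sqrt_lt_sqrt zero_le_one hr1
  apply strictAntiOn_of_deriv_neg (convex_Ici _)
  · exact fun t ht => (Mfun_contAt (lt_trans one_pos (lt_of_lt_of_le hs1 ht))).continuousWithinAt
  · intro t ht
    rw [interior_Ici] at ht
    have ht0 : 0 < t := by linarith [lt_trans hs1 ht]
    rw [(Mfun_hasDeriv ht0).deriv]
    have ht2 : q / (q-2) < t ^ 2 := by
      have hsq := Real.sq_sqrt (le_of_lt (lt_trans one_pos hr1))
      have hts : Real.sqrt (q/(q-2)) < t := ht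
      nlinarith [mul_pos (sub_pos.mpr hts)
        (add_pos ht0 (Real.sqrt_pos.mpr (lt_trans one_pos hr1)))]
    have hneg : (2-q) * t ^ 2 + q < 0 := by
      have h2 : (2-q) * t ^ 2 < (2-q) * (q/(q-2)) := by
        apply mul_lt_mul_of_neg_left ht2 (by linarith)
      have h3 : (2-q) * (q/(q-2)) = -q := by field_simp; ring
      linarith
    have hp : 0 < t ^ (-q-1) := Real.rpow_pos_of_pos ht0 _
    exact mul_neg_of_pos_of_neg hp hneg

lemma Mfun_at_tm {q : ℝ} (hq : 3 < q) :
    Mfun q (Real.sqrt (q / (q-2))) = alphaStar q := by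
  have hq2 : (0:ℝ) < q - 2 := by linarith
  have hq0 : (0:ℝ) < q := by linarith
  have hr0 : (0:ℝ) < q / (q-2) := by positivity
  have hsq := Real.sq_sqrt hr0.le
  unfold Mfun alphaStar
  rw [hsq, Real.sqrt_eq_rpow, ← Real.rpow_mul hr0.le]
  have h1 : q / (q-2) - 1 = 2 / (q-2) := by field_simp; ring
  have h2 : (q - 2) / q = (q / (q-2))⁻¹ := by rw [inv_div]
  rw [h1, h2, Real.inv_rpow hr0.le, ← Real.rpow_neg hr0.le]
  norm_num
  left
  ring

lemma fQ_eq {q α t : ℝ} (ht : 0 < t) : fQ q α t = t ^ q * (Mfun q t - α) := by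
  unfold fQ Mfun
  have h : t ^ q * t ^ (-q) = 1 := by
    rw [← Real.rpow_add ht, add_neg_cancel, Real.rpow_zero]
  calc t ^ 2 - 1 - α * t ^ q = (t ^ 2 - 1) * (t ^ q * t ^ (-q)) - α * t ^ q := by
        rw [h]; ring
    _ = t ^ q * ((t ^ 2 - 1) * t ^ (-q) - α) := by ring

lemma roots_structure {q α : ℝ} (hq : 3 < q) (hα : α ∈ Ioo (0:ℝ) (alphaStar q)) :
    ∃ a b : ℝ, 1 < a ∧ a < Real.sqrt (q / (q-2)) ∧ Real.sqrt (q / (q-2)) < b ∧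
      Mfun q a = α ∧ Mfun q b = α ∧ {t : ℝ | 0 < t ∧ fQ q α t = 0} = {a, b} := by
  obtain ⟨hα0, hαs⟩ := hα
  have hq2 : (0:ℝ) < q - 2 := by linarith
  have hq0 : (0:ℝ) < q := by linarith
  set tm := Real.sqrt (q / (q-2)) with htm_def
  have hr1 : 1 < q / (q-2) := (one_lt_div hq2).mpr (by linarith)
  have hs1 : 1 < tm := by
    rw [htm_def, show (1:ℝ) = Real.sqrt 1 by simp]
    exact Real.sqrt_lt_sqrt zero_le_one hr1
  have hM1 : Mfun q 1 = 0 := by unfold Mfun; simp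
  have hMtm : Mfun q tm = alphaStar q := Mfun_at_tm hq
  have hcont : ∀ s : Set ℝ, s ⊆ Ioi (0:ℝ) → ContinuousOn (Mfun q) s :=
    fun s hs t ht => (Mfun_contAt (hs ht)).continuousWithinAt
  have hIVT1 := intermediate_value_Ioo hs1.le
    (hcont (Icc 1 tm) (fun t ht => lt_of_lt_of_le one_pos ht.1))
  have hain : α ∈ Ioo (Mfun q 1) (Mfun q tm) := by rw [hM1, hMtm]; exact ⟨hα0, hαs⟩
  obtain ⟨a, haI, haM⟩ := hIVT1 hain
  have htend : Tendsto (fun t : ℝ => t ^ (2 - q)) atTop (nhds 0) := by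
    have := tendsto_rpow_neg_atTop (y := q - 2) (by linarith)
    simpa [neg_sub] using this
  have hev : ∀ᶠ t : ℝ in atTop, Mfun q t < α := by
    filter_upwards [htend.eventually_lt_const hα0, eventually_gt_atTop (1:ℝ)] with t h1 h2
    have ht0 : (0:ℝ) < t := lt_trans one_pos h2
    have hMle : Mfun q t < t ^ (2-q) := by
      unfold Mfun
      have h3 : t ^ (2-q) = t ^ (2:ℕ) * t ^ (-q) := by
        rw [show (2:ℝ) - q = (2:ℕ) + (-q) by push_cast; ring, Real.rpow_add ht0,
          Real.rpow_natCast]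
      rw [h3]
      have : (0:ℝ) < t ^ (-q) := Real.rpow_pos_of_pos ht0 _
      nlinarith
    linarith
  obtain ⟨T, hT⟩ := (hev.and (eventually_gt_atTop tm)).exists
  have hIVT2 := intermediate_value_Ioo' hT.2.le
    (hcont (Icc tm T) (fun t ht => lt_trans one_pos (lt_of_lt_of_le hs1 ht.1)))
  have hbin : α ∈ Ioo (Mfun q T) (Mfun q tm) := by rw [hMtm]; exact ⟨hT.1, hαs⟩
  obtain ⟨b, hbI, hbM⟩ := hIVT2 hbin
  refine ⟨a, b, haI.1, haI.2, hbI.1, haM, hbM, ?_⟩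
  ext t
  simp only [mem_setOf_eq, mem_insert_iff, mem_singleton_iff]
  constructor
  · rintro ⟨ht0, htf⟩
    rw [fQ_eq ht0] at htf
    have htq : (0:ℝ) < t ^ q := Real.rpow_pos_of_pos ht0 q
    have hMt : Mfun q t = α := by
      rcases mul_eq_zero.mp htf with h | h
      · exact absurd h htq.ne'
      · linarith [sub_eq_zero.mp h]
    have ht1 : 1 < t := by
      by_contra hle
      push_neg at hle
      have : Mfun q t ≤ 0 := by
        unfold Mfun
        apply mul_nonpos_of_nonpos_of_nonneg
        · nlinarith
        · exact (Real.rpow_pos_of_pos ht0 _).le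
      linarith [hMt ▸ this]
    rcases le_total t tm with h | h
    · left
      exact (Mfun_strictMonoOn hq).injOn ⟨ht1.le, h⟩ ⟨haI.1.le, haI.2.le⟩
        (by rw [hMt, haM])
    · right
      exact (Mfun_strictAntiOn hq).injOn h (le_of_lt hbI.1) (by rw [hMt, hbM])
  · have hb0 : (0:ℝ) < b := lt_trans one_pos (lt_trans hs1 hbI.1)
    rintro (h | h)
    · rw [h]
      exact ⟨lt_trans one_pos haI.1, by rw [fQ_eq (lt_trans one_pos haI.1), haM]; ring⟩
    · rw [h]
      exact ⟨hb0, by rw [fQ_eq hb0, hbM]; ring⟩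

end Aux

/-- for q > 3, g₂ = 2tf' + (q-1)f satisfies g₂(x₀) > 0, g₂(x₁) < 0,
and g₂ changes sign exactly once on [x₀, x₁]. -/
theorem stmt_18 (q α : ℝ) (hq : 3 < q) (hα : α ∈ Ioo (0 : ℝ) (alphaStar q)) :
    let g2 : ℝ → ℝ := fun t => 2 * t * fQd1 q α t + (q - 1) * fQ q α t
    0 < g2 (x0 q α) ∧ g2 (x1 q α) < 0 ∧
    ∃! c : ℝ, c ∈ Ioo (x0 q α) (x1 q α) ∧
      (∀ t ∈ Ico (x0 q α) c, 0 < g2 t) ∧ (∀ t ∈ Ioc c (x1 q α), g2 t < 0) := by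
  intro g2
  obtain ⟨a, b, ha1, hatm, htmb, haM, hbM, hS⟩ := roots_structure hq hα
  obtain ⟨hα0, hαs⟩ := hα
  have hq2 : (0:ℝ) < q - 2 := by linarith
  have hr1 : 1 < q / (q-2) := (one_lt_div hq2).mpr (by linarith)
  have hs1 : 1 < Real.sqrt (q / (q-2)) := by
    rw [show (1:ℝ) = Real.sqrt 1 by simp]
    exact Real.sqrt_lt_sqrt zero_le_one hr1
  have hb1 : 1 < b := lt_trans hs1 htmb
  have hab : a < b := lt_trans hatm htmb
  have ha0 : (0:ℝ) < a := lt_trans one_pos ha1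
  have hb0 : (0:ℝ) < b := lt_trans one_pos hb1
  -- x0 = a, x1 = b
  have hx0 : x0 q α = a := by
    rw [x0, hS, csInf_pair, inf_eq_left.mpr hab.le]
  have hx1 : x1 q α = b := by
    rw [x1, hS, csSup_pair, sup_eq_right.mpr hab.le]
  -- root equations: α * t^q = t^2 - 1
  have hroot : ∀ t : ℝ, 0 < t → Mfun q t = α → α * t ^ q = t ^ 2 - 1 := by
    intro t ht hM
    rw [Mfun] at hM
    have h : t ^ q * t ^ (-q) = 1 := by
      rw [← Real.rpow_add ht, add_neg_cancel, Real.rpow_zero]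
    calc α * t ^ q = ((t ^ 2 - 1) * t ^ (-q)) * t ^ q := by rw [hM]
      _ = (t ^ 2 - 1) * (t ^ q * t ^ (-q)) := by ring
      _ = t ^ 2 - 1 := by rw [h]; ring
  have hra : α * a ^ q = a ^ 2 - 1 := hroot a ha0 haM
  have hrb : α * b ^ q = b ^ 2 - 1 := hroot b hb0 hbM
  -- explicit formula for g2 on positives
  have hg2 : ∀ t : ℝ, 0 < t → g2 t = (q+3) * t ^ 2 - (q-1) - α * (3*q-1) * t ^ q := by
    intro t ht
    show 2 * t * (2 * t - α * q * t ^ (q-1)) + (q - 1) * (t ^ 2 - 1 - α * t ^ q) = _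
    have h : t ^ q = t ^ (q-1) * t := by
      rw [← Real.rpow_add_one ht.ne' (q-1)]; ring_nf
    rw [h]; ring
  -- squares vs q/(q-2)
  have hsq : Real.sqrt (q / (q-2)) ^ 2 = q / (q-2) := Real.sq_sqrt (by positivity)
  have ha2 : a ^ 2 < q / (q-2) := by
    nlinarith [Real.sqrt_pos.mpr (lt_trans one_pos hr1)]
  have hb2 : q / (q-2) < b ^ 2 := by
    nlinarith [Real.sqrt_pos.mpr (lt_trans one_pos hr1)]
  have hqr : (2 - q) * (q / (q-2)) + q = 0 := by field_simp; ring
  -- g2 values at the roots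
  have hg2a : 0 < g2 a := by
    rw [hg2 a ha0]
    have : (q+3) * a ^ 2 - (q-1) - α * (3*q-1) * a ^ q
        = 2 * ((2-q) * a ^ 2 + q) := by
      have : α * (3*q-1) * a ^ q = (3*q-1) * (a^2-1) := by
        rw [mul_comm α (3*q-1), mul_assoc, hra]
      rw [this]; ring
    rw [this]
    have h2 : (2-q) * a ^ 2 > (2-q) * (q/(q-2)) := mul_lt_mul_of_neg_left ha2 (by linarith)
    linarith
  have hg2b : g2 b < 0 := by
    rw [hg2 b hb0]
    have he : (q+3) * b ^ 2 - (q-1) - α * (3*q-1) * b ^ q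
        = 2 * ((2-q) * b ^ 2 + q) := by
      have : α * (3*q-1) * b ^ q = (3*q-1) * (b^2-1) := by
        rw [mul_comm α (3*q-1), mul_assoc, hrb]
      rw [this]; ring
    rw [he]
    have h2 : (2-q) * b ^ 2 < (2-q) * (q/(q-2)) := mul_lt_mul_of_neg_left hb2 (by linarith)
    linarith
  -- continuity of g2 on [a,b]
  have hg2cont : ContinuousOn g2 (Icc a b) := by
    intro t ht
    have ht0 : (0:ℝ) < t := lt_of_lt_of_le ha0 ht.1
    apply ContinuousAt.continuousWithinAt
    have h1 : ContinuousAt (fun s : ℝ => s ^ (q-1)) t :=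
      Real.continuousAt_rpow_const _ _ (Or.inl ht0.ne')
    have h2 : ContinuousAt (fun s : ℝ => s ^ q) t :=
      Real.continuousAt_rpow_const _ _ (Or.inl ht0.ne')
    exact (((continuousAt_const.mul continuousAt_id).mul
        ((continuousAt_const.mul continuousAt_id).sub (continuousAt_const.mul h1)))).add
      (continuousAt_const.mul
        (((continuousAt_id.pow 2).sub continuousAt_const).sub (continuousAt_const.mul h2)))
  -- stays-negative in terms of g2
  have hstays : ∀ u v : ℝ, 1 < u → u < v → 0 < v → g2 u ≤ 0 → g2 v < 0 := by
    intro u v hu huv hv0 hgu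
    rw [hg2 u (lt_trans one_pos hu)] at hgu
    rw [hg2 v hv0]
    have := stays_neg hq hα0 hu huv (by linarith)
    linarith
  -- find c by IVT
  have hc0 : (0:ℝ) ∈ Ioo (g2 b) (g2 a) := ⟨hg2b, hg2a⟩
  obtain ⟨c, hcI, hgc⟩ := intermediate_value_Ioo' hab.le hg2cont hc0
  rw [hx0, hx1]
  refine ⟨hg2a, hg2b, c, ⟨hcI, ?_, ?_⟩, ?_⟩
  · intro t ht
    by_contra hle
    push_neg at hle
    have := hstays t c (lt_of_lt_of_le ha1 ht.1) ht.2 (lt_trans ha0 hcI.1) hle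
    rw [hgc] at this
    exact lt_irrefl 0 this
  · intro t ht
    exact hstays c t (lt_trans ha1 hcI.1) ht.1 (lt_of_lt_of_le ha0 (le_of_lt (lt_of_lt_of_le hcI.1 ht.1.le))) (le_of_eq hgc)
  · rintro c' ⟨hc'I, hpos', hneg'⟩
    rcases lt_trichotomy c' c with h | h | h
    · exact absurd (hneg' c ⟨h, hcI.2.le⟩) (by rw [hgc]; exact lt_irrefl 0)
    · exact h
    · exfalso
      have h1 := hpos' c ⟨hcI.1.le, h⟩
      rw [hgc] at h1
      exact lt_irrefl 0 h1
end
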